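/- arXiv:2302.03434 — 3 statements merged into one kernel-verified Lean document; each statement's English description precedes it below -/
import Mathlib

section
/- For every weighted tree grammar with constraints (WTGc) over a commutative semiring S there exists an equivalent weighted tree automaton with constraints (WTAc) over S, i.e. a WTGc in which every production is normalized; moreover, if the given WTGc is positive, then the equivalent WTAc can be chosen positive. -/
/-! Common framework: ranked trees, weighted tree grammars with constraints (WTGc). -/

/-- Unranked trees over a symbol type `α`; wellformedness w.r.t. an arity map
is imposed separately. -/
inductive RTree (α : Type) : Type
  | node : α → List (RTree α) → RTree α

namespace RTree

variable {α β : Type}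

/-- The subtree of `t` at position `w` (positions are lists of child indices). -/
def subtreeAt : RTree α → List ℕ → Option (RTree α)
  | t, [] => some t
  | node _ ts, i :: w => (ts[i]?).bind fun c => subtreeAt c w
termination_by t w => w.length

/-- Replace the subtree at position `w` by `s`. -/
def replaceAt : RTree α → List ℕ → RTree α → RTree α
  | _, [], s => s
  | node a ts, i :: w, s =>
      node a (ts.mapIdx fun j c => if j = i then replaceAt c w s else c)
termination_by t w s => w.length

/-- Relabeling of trees. -/
def map (f : α → β) : RTree α → RTree β
  | node a ts => node (f a) (ts.attach.map fun c => map f c.1)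
termination_by t => sizeOf t
decreasing_by
  simp_wf
  have := List.sizeOf_lt_of_mem c.2
  omega

/-- The size of a tree: its number of positions. -/
def size : RTree α → ℕ
  | node _ ts => 1 + (ts.attach.map fun c => size c.1).sum
termination_by t => sizeOf t
decreasing_by
  simp_wf
  have := List.sizeOf_lt_of_mem c.2
  omega

/-- The height of a tree: the maximal length of one of its positions. -/
def height : RTree α → ℕ
  | node _ ts => (ts.attach.map fun c => height c.1 + 1).foldr max 0
termination_by t => sizeOf t
decreasing_by
  simp_wf
  have := List.sizeOf_lt_of_mem c.2
  omega

/-- Wellformedness of a tree w.r.t. a ranked alphabet: the number of children of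
every node equals the rank of its label. -/
inductive WF (ar : α → ℕ) : RTree α → Prop
  | node {a : α} {ts : List (RTree α)} :
      ts.length = ar a → (∀ t ∈ ts, WF ar t) → WF ar (node a ts)

/-- Substitution of trees for the nonterminal-labelled (i.e. `Sum.inr`-labelled)
leaves: the leaf at absolute position `w` is replaced by `θ w`.  The second
argument is the position of the current subtree. -/
def substNT {Q : Type} (θ : List ℕ → RTree α) : RTree (α ⊕ Q) → List ℕ → RTree α
  | node (Sum.inr _) _, w => θ w
  | node (Sum.inl a) ts, w =>
      node a (ts.attach.mapIdx fun i c => substNT θ c.1 (w ++ [i]))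
termination_by t _ => sizeOf t
decreasing_by
  simp_wf
  have := List.sizeOf_lt_of_mem c.2
  omega

/-- The list of pairs (position, nonterminal) of the nonterminal-labelled
positions of a tree in `T_Σ(Q)`, in left-to-right order. -/
def ntPos {Q : Type} : RTree (α ⊕ Q) → List (List ℕ × Q)
  | node (Sum.inr q) _ => [([], q)]
  | node (Sum.inl _) ts =>
      (ts.attach.mapIdx fun i c => (ntPos c.1).map fun x => (i :: x.1, x.2)).flatten
termination_by t => sizeOf t
decreasing_by
  simp_wf
  have := List.sizeOf_lt_of_mem c.2
  omega

/-- Substitute the trees of the list `us` for the variables (`Sum.inr i` stands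
for the variable `x_{i+1}`); variables without a corresponding list entry stay. -/
def substVL (us : List (RTree (β ⊕ ℕ))) : RTree (β ⊕ ℕ) → RTree (β ⊕ ℕ)
  | node (Sum.inr i) ts => (us[i]?).getD (node (Sum.inr i) ts)
  | node (Sum.inl b) ts => node (Sum.inl b) (ts.attach.map fun c => substVL us c.1)
termination_by t => sizeOf t
decreasing_by
  simp_wf
  have := List.sizeOf_lt_of_mem c.2
  omega

/-- Application of the tree homomorphism induced by `h : α → T_β(X)`. -/
def applyHom (h : α → RTree (β ⊕ ℕ)) : RTree α → RTree (β ⊕ ℕ)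
  | node a ts => substVL (ts.attach.map fun c => applyHom h c.1) (h a)
termination_by t => sizeOf t
decreasing_by
  simp_wf
  have := List.sizeOf_lt_of_mem c.2
  omega

/-- A tree `t` satisfies the constraint `(v, v')` if both positions exist in `t`
and the corresponding subtrees are equal. -/
def satC (t : RTree α) (c : List ℕ × List ℕ) : Prop :=
  ∃ s, t.subtreeAt c.1 = some s ∧ t.subtreeAt c.2 = some s

end RTree

/-- The strict lexicographic order on positions in which proper prefixes are
*larger* than their extensions (and `ε` is the largest element). -/
inductive PosLt : List ℕ → List ℕ → Prop
  | ne_nil (i : ℕ) (w : List ℕ) : PosLt (i :: w) []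
  | head {i j : ℕ} (v w : List ℕ) : i < j → PosLt (i :: v) (j :: w)
  | tail {i : ℕ} {v w : List ℕ} : PosLt v w → PosLt (i :: v) (i :: w)

/-- A derivation (a list of production/position pairs) is left-most if its
positions are strictly increasing w.r.t. `PosLt`. -/
def Leftmost {P : Type} (d : List (P × List ℕ)) : Prop :=
  List.Chain' PosLt (d.map Prod.snd)

/-- The two-element Boolean semiring. -/
inductive B2 : Type
  | zero
  | one
  deriving DecidableEq

namespace B2

def add : B2 → B2 → B2
  | zero, x => x
  | one, _ => one

def mul : B2 → B2 → B2
  | zero, _ => zero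
  | one, x => x

instance : Zero B2 := ⟨zero⟩
instance : One B2 := ⟨one⟩
instance : Add B2 := ⟨add⟩
instance : Mul B2 := ⟨mul⟩

instance : CommSemiring B2 where
  add_assoc := fun a b c => by cases a <;> cases b <;> cases c <;> rfl
  zero_add := fun a => by cases a <;> rfl
  add_zero := fun a => by cases a <;> rfl
  add_comm := fun a b => by cases a <;> cases b <;> rfl
  mul_assoc := fun a b c => by cases a <;> cases b <;> cases c <;> rfl
  one_mul := fun a => by cases a <;> rfl
  mul_one := fun a => by cases a <;> rfl
  zero_mul := fun a => by cases a <;> rfl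
  mul_zero := fun a => by cases a <;> rfl
  left_distrib := fun a b c => by cases a <;> cases b <;> cases c <;> rfl
  right_distrib := fun a b c => by cases a <;> cases b <;> cases c <;> rfl
  mul_comm := fun a b => by cases a <;> cases b <;> rfl
  nsmul := nsmulRec
  npow := npowRec
  nsmul_zero := fun a => rfl
  nsmul_succ := fun n a => rfl
  npow_zero := fun a => rfl
  npow_succ := fun n a => rfl

end B2

/-- A weighted tree grammar with constraints (WTGc) over the commutative
semiring `S` and the ranked alphabet `(Γ, ar)`: finitely many nonterminals `Q`
with final weights, and finitely many productions `(lhs p, tgt p, eqc p, nec p)`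
with weights, where the left-hand side is a wellformed tree over `Γ` and the
nonterminals that is not itself a nonterminal. -/
structure WTGc (S : Type) [CommSemiring S] (Γ : Type) (ar : Γ → ℕ) where
  Q : Type
  P : Type
  finQ : Finite Q
  finP : Finite P
  final : Q → S
  lhs : P → RTree (Γ ⊕ Q)
  tgt : P → Q
  eqc : P → Finset (List ℕ × List ℕ)
  nec : P → Finset (List ℕ × List ℕ)
  wt : P → S
  lhs_wf : ∀ p, (lhs p).WF (Sum.elim ar fun _ => 0)
  lhs_ne : ∀ (p : P) (q : Q), lhs p ≠ RTree.node (Sum.inr q) []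

namespace WTGc

variable {S : Type} [CommSemiring S] {Γ : Type} {ar : Γ → ℕ}

/-- A single derivation step of `G` on input tree `t`: at position `w` of the
sentential form `ξ` the left-hand side of production `p` is replaced by its
target nonterminal, provided `t|_w` satisfies all equality constraints and
dissatisfies all inequality constraints of `p`. -/
def Step (G : WTGc S Γ ar) (t : RTree Γ) (ξ : RTree (Γ ⊕ G.Q)) (p : G.P)
    (w : List ℕ) (ζ : RTree (Γ ⊕ G.Q)) : Prop :=
  ξ.subtreeAt w = some (G.lhs p) ∧
  ζ = ξ.replaceAt w (RTree.node (Sum.inr (G.tgt p)) []) ∧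
  ∃ s, t.subtreeAt w = some s ∧
    (∀ c ∈ G.eqc p, RTree.satC s c) ∧ (∀ c ∈ G.nec p, ¬ RTree.satC s c)

/-- `Derives G t ξ d ζ`: the sequence `d` of production/position pairs is a
derivation of `G` for the input tree `t` from the sentential form `ξ` to `ζ`. -/
inductive Derives (G : WTGc S Γ ar) (t : RTree Γ) :
    RTree (Γ ⊕ G.Q) → List (G.P × List ℕ) → RTree (Γ ⊕ G.Q) → Prop
  | refl (ξ : RTree (Γ ⊕ G.Q)) : Derives G t ξ [] ξ
  | step {ξ ζ η : RTree (Γ ⊕ G.Q)} {p : G.P} {w : List ℕ} {d : List (G.P × List ℕ)} :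
      G.Step t ξ p w ζ → Derives G t ζ d η → Derives G t ξ ((p, w) :: d) η

/-- `D G q t` : the set of complete left-most derivations of `G` for `t` to `q`. -/
def D (G : WTGc S Γ ar) (q : G.Q) (t : RTree Γ) : Set (List (G.P × List ℕ)) :=
  {d | Derives G t (t.map Sum.inl) d (RTree.node (Sum.inr q) []) ∧ Leftmost d}

/-- The weight of a derivation: the product of the weights of its productions. -/
def wtD (G : WTGc S Γ ar) (d : List (G.P × List ℕ)) : S :=
  (d.map fun x => G.wt x.1).prod

/-- The weight of `t` at nonterminal `q`: the sum of the weights of all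
complete left-most derivations of `G` for `t` to `q`. -/
noncomputable def qWeight (G : WTGc S Γ ar) (q : G.Q) (t : RTree Γ) : S :=
  ∑ᶠ d ∈ G.D q t, G.wtD d

/-- The weighted tree language generated by `G`. -/
noncomputable def weight (G : WTGc S Γ ar) (t : RTree Γ) : S :=
  ∑ᶠ q : G.Q, G.final q * G.qWeight q t

/-- The support of `G`. -/
def supp (G : WTGc S Γ ar) : Set (RTree Γ) := {t | G.weight t ≠ 0}

/-- Two WTGc are equivalent if they generate the same weighted tree language. -/
def Equivalent (G G' : WTGc S Γ ar) : Prop := ∀ t, G.weight t = G'.weight t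

/-- A production is normalized if its left-hand side is of the form
`σ(q_1, …, q_k)` with nonterminals `q_i`. -/
def NormalizedProd (G : WTGc S Γ ar) (p : G.P) : Prop :=
  ∃ (σ : Γ) (qs : List G.Q),
    G.lhs p = RTree.node (Sum.inl σ) (qs.map fun q => RTree.node (Sum.inr q) [])

/-- A WTGc is a WTAc if all its productions are normalized. -/
def IsWTAc (G : WTGc S Γ ar) : Prop := ∀ p, G.NormalizedProd p

/-- A WTGc is positive if no production has inequality constraints. -/
def Positive (G : WTGc S Γ ar) : Prop := ∀ p, G.nec p = ∅

/-- A WTGc is unconstrained (a WTG) if no production has any constraints. -/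
def Unconstrained (G : WTGc S Γ ar) : Prop := ∀ p, G.eqc p = ∅ ∧ G.nec p = ∅

/-- A weighted tree automaton: normalized and unconstrained. -/
def IsWTA (G : WTGc S Γ ar) : Prop := G.IsWTAc ∧ G.Unconstrained

/-- Position `w` of `ℓ` is labelled by the nonterminal `q`. -/
def ntLabelAt {Q : Type} (ℓ : RTree (Γ ⊕ Q)) (w : List ℕ) (q : Q) : Prop :=
  ℓ.subtreeAt w = some (RTree.node (Sum.inr q) [])

/-- Position `w` of `ℓ` is a nonterminal-labelled position. -/
def IsNTpos {Q : Type} (ℓ : RTree (Γ ⊕ Q)) (w : List ℕ) : Prop :=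
  ∃ q : Q, ntLabelAt ℓ w q

/-- A WTGc is classic if all constrained positions of all productions are
nonterminal-labelled positions of the respective left-hand side. -/
def Classic (G : WTGc S Γ ar) : Prop :=
  ∀ p, ∀ c ∈ G.eqc p ∪ G.nec p, IsNTpos (G.lhs p) c.1 ∧ IsNTpos (G.lhs p) c.2

/-- Boolean final weights. -/
def BooleanFinal (G : WTGc S Γ ar) : Prop := ∀ q, G.final q = 0 ∨ G.final q = 1

/-- Unambiguous: every tree has at most one complete left-most derivation to a
nonterminal with non-zero final weight. -/
def Unambiguous (G : WTGc S Γ ar) : Prop :=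
  ∀ (t : RTree Γ) (q q' : G.Q) (d d' : List (G.P × List ℕ)),
    G.final q ≠ 0 → G.final q' ≠ 0 → d ∈ G.D q t → d' ∈ G.D q' t → q = q' ∧ d = d'

/-- Constraint-determined: two productions never differ only in their
constraint sets. -/
def ConstraintDetermined (G : WTGc S Γ ar) : Prop :=
  ∀ p p' : G.P, G.lhs p = G.lhs p' → G.tgt p = G.tgt p' →
    G.eqc p = G.eqc p' ∧ G.nec p = G.nec p'

/-- `bot` is a sink nonterminal of `G`. -/
def SinkNT (G : WTGc S Γ ar) (bot : G.Q) : Prop :=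
  G.final bot = 0 ∧
  (∀ p, G.tgt p = bot →
    G.wt p = 1 ∧ G.eqc p = ∅ ∧ G.nec p = ∅ ∧
    ∃ σ : Γ, G.lhs p =
      RTree.node (Sum.inl σ) (List.replicate (ar σ) (RTree.node (Sum.inr bot) []))) ∧
  (∀ σ : Γ, ∃ p, G.tgt p = bot ∧ G.lhs p =
      RTree.node (Sum.inl σ) (List.replicate (ar σ) (RTree.node (Sum.inr bot) [])))

/-- The equivalence on positions generated by a set of equality constraints. -/
inductive CEqv (E : Finset (List ℕ × List ℕ)) : List ℕ → List ℕ → Prop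
  | base {v v' : List ℕ} : (v, v') ∈ E → CEqv E v v'
  | refl (v : List ℕ) : CEqv E v v
  | symm {v v' : List ℕ} : CEqv E v v' → CEqv E v' v
  | trans {u v w : List ℕ} : CEqv E u v → CEqv E v w → CEqv E u w

/-- Eq-restricted (Definition 3.2): a positive classic WTGc with a sink
nonterminal `bot` such that within every equivalence class of constrained
nonterminal positions of a left-hand side all nonterminals are `bot` except
for exactly one governing position. -/
def EqRestricted (G : WTGc S Γ ar) (bot : G.Q) : Prop :=
  G.SinkNT bot ∧ G.Classic ∧ G.Positive ∧
  ∀ (p : G.P) (w : List ℕ) (q : G.Q), ntLabelAt (G.lhs p) w q →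
    ∃ q' : G.Q,
      (∀ (w' : List ℕ) (q'' : G.Q), CEqv (G.eqc p) w w' →
          ntLabelAt (G.lhs p) w' q'' → q'' = q' ∨ q'' = bot) ∧
      (∃! w' : List ℕ, CEqv (G.eqc p) w w' ∧ ntLabelAt (G.lhs p) w' q')

end WTGc

/-- A tree homomorphism from `(Γ, arΓ)` to `(Δ, arΔ)`, given by its defining
map: `hmap a ∈ T_Δ(X_{arΓ a})`, where `Sum.inr i` represents the variable
`x_{i+1}`. -/
structure TreeHom (Γ : Type) (arΓ : Γ → ℕ) (Δ : Type) (arΔ : Δ → ℕ) where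
  hmap : Γ → RTree (Δ ⊕ ℕ)
  hmap_wf : ∀ a, (hmap a).WF (Sum.elim arΔ fun _ => 0)
  hmap_var : ∀ (a : Γ) (i : ℕ) (w : List ℕ),
    (hmap a).subtreeAt w = some (RTree.node (Sum.inr i) []) → i < arΓ a

namespace TreeHom

variable {Γ Δ : Type} {arΓ : Γ → ℕ} {arΔ : Δ → ℕ}

/-- Nondeleting: every variable occurs in the defining tree. -/
def Nondeleting (h : TreeHom Γ arΓ Δ arΔ) : Prop :=
  ∀ (a : Γ), ∀ i < arΓ a, ∃ w : List ℕ,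
    (h.hmap a).subtreeAt w = some (RTree.node (Sum.inr i) [])

/-- Nonerasing: no defining tree is a variable. -/
def Nonerasing (h : TreeHom Γ arΓ Δ arΔ) : Prop :=
  ∀ a : Γ, ∃ (δ : Δ) (ts : List (RTree (Δ ⊕ ℕ))), h.hmap a = RTree.node (Sum.inl δ) ts

/-- Application of the induced tree homomorphism. -/
def apply (h : TreeHom Γ arΓ Δ arΔ) : RTree Γ → RTree (Δ ⊕ ℕ) :=
  RTree.applyHom h.hmap

/-- The preimage of `u ∈ T_Δ` under the induced tree homomorphism. -/
def preimage (h : TreeHom Γ arΓ Δ arΔ) (u : RTree Δ) : Set (RTree Γ) :=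
  {t | t.WF arΓ ∧ h.apply t = u.map Sum.inl}

/-- The image `h(A)` of a weighted tree language `A` under `h`. -/
noncomputable def image {S : Type} [CommSemiring S] (h : TreeHom Γ arΓ Δ arΔ)
    (A : RTree Γ → S) (u : RTree Δ) : S :=
  ∑ᶠ t ∈ h.preimage u, A t

end TreeHom



/-! ### Auxiliary development for the proof of `stmt0`. -/

namespace Stmt0

open RTree

/-- Strong induction principle for `RTree` via children membership. -/
theorem rtree_ind {α : Type} {motive : RTree α → Prop}
    (h : ∀ a ts, (∀ c ∈ ts, motive c) → motive (RTree.node a ts)) : ∀ t, motive t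
  | RTree.node a ts => h a ts (fun c hc => rtree_ind h c)
termination_by t => sizeOf t
decreasing_by
  simp_wf
  have := List.sizeOf_lt_of_mem hc
  omega

theorem attach_map_eq {α β : Type} (l : List α) (g : α → β) :
    l.attach.map (fun c => g c.1) = l.map g := by
  exact List.attach_map_val

theorem map_node {α β : Type} (f : α → β) (a : α) (ts : List (RTree α)) :
    RTree.map f (RTree.node a ts) = RTree.node (f a) (ts.map (RTree.map f)) := by
  rw [RTree.map, attach_map_eq]

@[simp] theorem subtreeAt_nil {α : Type} (t : RTree α) : t.subtreeAt [] = some t := by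
  simp [RTree.subtreeAt]

@[simp] theorem subtreeAt_cons {α : Type} (a : α) (ts : List (RTree α)) (i : ℕ) (w : List ℕ) :
    (RTree.node a ts).subtreeAt (i :: w) = (ts[i]?).bind fun c => c.subtreeAt w := by
  rw [RTree.subtreeAt]

theorem subtreeAt_append {α : Type} (u : List ℕ) :
    ∀ (t : RTree α) (v : List ℕ), t.subtreeAt (u ++ v) = (t.subtreeAt u).bind (fun s => s.subtreeAt v) := by
  induction u with
  | nil => intro t v; simp
  | cons i u ih =>
    intro t v
    cases t with
    | node a ts =>
      simp only [List.cons_append, subtreeAt_cons]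
      cases h : ts[i]? with
      | none => rfl
      | some c => simp [ih c v]

@[simp] theorem replaceAt_nil {α : Type} (t s : RTree α) : t.replaceAt [] s = s := by
  simp [RTree.replaceAt]

theorem replaceAt_cons {α : Type} (a : α) (ts : List (RTree α)) (i : ℕ) (w : List ℕ) (s : RTree α) :
    (RTree.node a ts).replaceAt (i :: w) s
      = RTree.node a (ts.mapIdx fun j c => if j = i then c.replaceAt w s else c) := by
  simp [RTree.replaceAt]

theorem mapIdx_id {α : Type} (l : List α) : (l.mapIdx fun _ c => c) = l := by
  apply List.ext_getElem <;> simp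

theorem replaceAt_cons_zero {α : Type} (a : α) (t₀ : RTree α) (tr : List (RTree α))
    (w : List ℕ) (s : RTree α) :
    (RTree.node a (t₀ :: tr)).replaceAt (0 :: w) s = RTree.node a (t₀.replaceAt w s :: tr) := by
  rw [replaceAt_cons, List.mapIdx_cons]
  simp only [if_pos rfl]
  congr 2
  have : (fun (i : ℕ) (c : RTree α) => if i + 1 = 0 then c.replaceAt w s else c)
      = fun _ c => c := by
    funext i c; simp
  rw [this, mapIdx_id]

theorem replaceAt_cons_succ {α : Type} (a : α) (t₀ : RTree α) (tr : List (RTree α))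
    (i : ℕ) (w : List ℕ) (s : RTree α) :
    (RTree.node a (t₀ :: tr)).replaceAt ((i+1) :: w) s
      = RTree.node a (t₀ :: (tr.mapIdx fun j c => if j = i then c.replaceAt w s else c)) := by
  rw [replaceAt_cons, List.mapIdx_cons]
  simp only [Nat.add_right_cancel_iff]
  congr 2

/-! ### Position order lemmas -/

theorem posLt_trans : ∀ {u v w : List ℕ}, PosLt u v → PosLt v w → PosLt u w := by
  intro u v w h1 h2
  induction h1 generalizing w with
  | ne_nil i u' => cases h2
  | head v' w' hij =>
    cases h2 with
    | ne_nil => exact PosLt.ne_nil _ _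
    | head _ _ h => exact PosLt.head _ _ (hij.trans h)
    | tail h => exact PosLt.head _ _ hij
  | tail h ih =>
    cases h2 with
    | ne_nil => exact PosLt.ne_nil _ _
    | head _ _ hj => exact PosLt.head _ _ hj
    | tail h2' => exact PosLt.tail (ih h2')

theorem posLt_irrefl : ∀ (v : List ℕ), ¬ PosLt v v := by
  intro v hv
  induction v with
  | nil => cases hv
  | cons i w ih =>
    cases hv with
    | head _ _ h => omega
    | tail h => exact ih h

theorem posLt_nil_of_ne {v : List ℕ} (h : v ≠ []) : PosLt v [] := by
  cases v with
  | nil => exact absurd rfl h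
  | cons i w => exact PosLt.ne_nil i w

theorem posLt_cons_iff {i j : ℕ} {v w : List ℕ} :
    PosLt (i :: v) (j :: w) ↔ i < j ∨ (i = j ∧ PosLt v w) := by
  constructor
  · intro h
    cases h with
    | head _ _ h => exact Or.inl h
    | tail h => exact Or.inr ⟨rfl, h⟩
  · rintro (h | ⟨rfl, h⟩)
    · exact PosLt.head _ _ h
    · exact PosLt.tail h

theorem posLt_zero_iff {v w : List ℕ} : PosLt (0 :: v) (0 :: w) ↔ PosLt v w := by
  rw [posLt_cons_iff]
  constructor
  · rintro (h | ⟨_, h⟩)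
    · exact absurd h (by omega)
    · exact h
  · exact fun h => Or.inr ⟨rfl, h⟩

theorem posLt_succ_iff {i j : ℕ} {v w : List ℕ} :
    PosLt ((i+1) :: v) ((j+1) :: w) ↔ PosLt (i :: v) (j :: w) := by
  rw [posLt_cons_iff, posLt_cons_iff]
  constructor
  · rintro (h | ⟨h, h'⟩)
    · exact Or.inl (by omega)
    · exact Or.inr ⟨by omega, h'⟩
  · rintro (h | ⟨h, h'⟩)
    · exact Or.inl (by omega)
    · exact Or.inr ⟨by omega, h'⟩


/-! ### Derivation lemmas for a generic WTGc -/

variable {S : Type} [CommSemiring S] {Γ : Type} {ar : Γ → ℕ}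

/-- Constraints of `p` are satisfied at the root of `t`. -/
def COK (G : WTGc S Γ ar) (p : G.P) (t : RTree Γ) : Prop :=
  (∀ c ∈ G.eqc p, t.satC c) ∧ (∀ c ∈ G.nec p, ¬ t.satC c)

/-- Left-most derivations of `G` on `t` from the initial form to `ℓ`. -/
def L (G : WTGc S Γ ar) (t : RTree Γ) (ℓ : RTree (Γ ⊕ G.Q)) : Set (List (G.P × List ℕ)) :=
  {d | G.Derives t (t.map Sum.inl) d ℓ ∧ Leftmost d}

theorem D_eq_L (G : WTGc S Γ ar) (q : G.Q) (t : RTree Γ) :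
    G.D q t = L G t (RTree.node (Sum.inr q) []) := rfl

theorem step_nil_elim {G : WTGc S Γ ar} {t ξ : _} {p : G.P} {ζ : _}
    (h : G.Step t ξ p [] ζ) :
    ξ = G.lhs p ∧ ζ = RTree.node (Sum.inr (G.tgt p)) [] ∧ COK G p t := by
  obtain ⟨h1, h2, s, hs, he, hn⟩ := h
  rw [subtreeAt_nil, Option.some_inj] at h1 hs
  subst hs
  exact ⟨h1, by simpa using h2, he, hn⟩

theorem step_nil_intro {G : WTGc S Γ ar} (p : G.P) (t : RTree Γ) (h : COK G p t) :
    G.Step t (G.lhs p) p [] (RTree.node (Sum.inr (G.tgt p)) []) :=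
  ⟨by simp, by simp, t, by simp, h.1, h.2⟩

theorem nostep {G : WTGc S Γ ar} {t : RTree Γ} {q : G.Q} {p : G.P} {w : List ℕ} {ζ : _} :
    ¬ G.Step t (RTree.node (Sum.inr q) []) p w ζ := by
  rintro ⟨h1, -, -⟩
  cases w with
  | nil =>
    rw [subtreeAt_nil, Option.some_inj] at h1
    exact G.lhs_ne p q h1.symm
  | cons i w => simp at h1

theorem derives_nil {G : WTGc S Γ ar} {t : RTree Γ} {ξ η : _} {d : List (G.P × List ℕ)}
    (h : G.Derives t ξ d η) (hd : d = []) : η = ξ := by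
  cases h with
  | refl => rfl
  | step hs h' => simp at hd

theorem derives_from_nt {G : WTGc S Γ ar} {t : RTree Γ} {q : G.Q} {d : _} {η : _}
    (h : G.Derives t (RTree.node (Sum.inr q) []) d η) :
    d = [] ∧ η = RTree.node (Sum.inr q) [] := by
  cases h with
  | refl => exact ⟨rfl, rfl⟩
  | step hs h' => exact absurd hs nostep

theorem derives_trans {G : WTGc S Γ ar} {t : RTree Γ} {ξ ζ η : _} {d₁ d₂ : _}
    (h1 : G.Derives t ξ d₁ ζ) (h2 : G.Derives t ζ d₂ η) : G.Derives t ξ (d₁ ++ d₂) η := by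
  induction h1 with
  | refl => simpa using h2
  | step hs h' ih => exact WTGc.Derives.step hs (ih h2)

theorem derives_append_split {G : WTGc S Γ ar} {t : RTree Γ} {ξ η : _} {d₁ d₂ : _}
    (h : G.Derives t ξ (d₁ ++ d₂) η) : ∃ ζ, G.Derives t ξ d₁ ζ ∧ G.Derives t ζ d₂ η := by
  induction d₁ generalizing ξ with
  | nil => exact ⟨ξ, WTGc.Derives.refl ξ, h⟩
  | cons y d₁ ih =>
    obtain ⟨p, w⟩ := y
    cases h with
    | step hs h' =>
      obtain ⟨ζ, hζ1, hζ2⟩ := ih h'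
      exact ⟨ζ, WTGc.Derives.step hs hζ1, hζ2⟩

theorem step_cons_shape {G : WTGc S Γ ar} {t : RTree Γ} {x : _} {ξs : _} {p : G.P}
    {i : ℕ} {w : List ℕ} {ζ : _} (h : G.Step t (RTree.node x ξs) p (i :: w) ζ) :
    ∃ ζs, ζ = RTree.node x ζs ∧ ζs.length = ξs.length := by
  obtain ⟨-, h2, -⟩ := h
  rw [replaceAt_cons] at h2
  exact ⟨_, h2, by simp⟩

theorem derives_root_inl {G : WTGc S Γ ar} {t : RTree Γ} {x : _} {ξs : _} {d : _}
    {b : Γ} {ηs : _} (h : G.Derives t (RTree.node x ξs) d (RTree.node (Sum.inl b) ηs)) :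
    x = Sum.inl b ∧ ηs.length = ξs.length ∧ ∀ y ∈ d, y.2 ≠ ([] : List ℕ) := by
  induction d generalizing x ξs with
  | nil =>
    have := derives_nil h rfl
    injection this with h1 h2
    subst h1; subst h2
    exact ⟨rfl, rfl, by simp⟩
  | cons y rest ih =>
    obtain ⟨p, w⟩ := y
    cases h with
    | step hs h' =>
      cases w with
      | nil =>
        obtain ⟨-, hζ, -⟩ := step_nil_elim hs
        subst hζ
        obtain ⟨-, hη⟩ := derives_from_nt h'
        exact absurd hη (by simp)
      | cons i w =>
        obtain ⟨ζs, hζ, hlen⟩ := step_cons_shape hs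
        subst hζ
        obtain ⟨hx, hl, hm⟩ := ih h'
        refine ⟨hx, by omega, ?_⟩
        intro y hy
        rcases List.mem_cons.mp hy with rfl | hy'
        · simp
        · exact hm y hy'

theorem derives_to_nt {G : WTGc S Γ ar} {t : RTree Γ} {x : Γ} {ξs : _} {d : _}
    {q : G.Q} {ηs : _}
    (h : G.Derives t (RTree.node (Sum.inl x) ξs) d (RTree.node (Sum.inr q) ηs)) :
    ∃ d' p, d = d' ++ [(p, ([] : List ℕ))] ∧ ηs = [] ∧ G.tgt p = q ∧ COK G p t ∧
      G.Derives t (RTree.node (Sum.inl x) ξs) d' (G.lhs p) := by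
  induction d generalizing x ξs with
  | nil =>
    have := derives_nil h rfl
    injection this with h1 h2
    exact absurd h1 (by simp)
  | cons y rest ih =>
    obtain ⟨p, w⟩ := y
    cases h with
    | step hs h' =>
      cases w with
      | nil =>
        obtain ⟨hξ, hζ, hcok⟩ := step_nil_elim hs
        subst hζ
        obtain ⟨hr, hη⟩ := derives_from_nt h'
        injection hη with h1 h2
        injection h1 with h1
        subst hr
        refine ⟨[], p, by simp, h2, h1.symm, hcok, ?_⟩
        rw [← hξ]
        exact WTGc.Derives.refl _
      | cons i w =>
        obtain ⟨ζs, hζ, -⟩ := step_cons_shape hs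
        subst hζ
        obtain ⟨d', p', h1, h2, h3, h4, h5⟩ := ih h'
        exact ⟨(p, i :: w) :: d', p', by simp [h1], h2, h3, h4, WTGc.Derives.step hs h5⟩

theorem wtD_nil (G : WTGc S Γ ar) : G.wtD [] = 1 := rfl

theorem wtD_append (G : WTGc S Γ ar) (d e : List (G.P × List ℕ)) :
    G.wtD (d ++ e) = G.wtD d * G.wtD e := by
  simp [WTGc.wtD]

theorem wtD_map_shift (G : WTGc S Γ ar) (f : List ℕ → List ℕ) (d : List (G.P × List ℕ)) :
    G.wtD (d.map fun y => (y.1, f y.2)) = G.wtD d := by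
  unfold WTGc.wtD
  rw [List.map_map]
  rfl

/-! ### Localization of steps and derivations -/

/-- Shift a position into child `0`. -/
def sh0 {P : Type} (y : P × List ℕ) : P × List ℕ := (y.1, 0 :: y.2)

/-- Shift the head of a position by one (used to pass between `t₀ :: tr` and `tr`). -/
def shPos : List ℕ → List ℕ
  | [] => []
  | i :: v => (i + 1) :: v

def shS {P : Type} (y : P × List ℕ) : P × List ℕ := (y.1, shPos y.2)

theorem shPos_injective : Function.Injective shPos := by
  have : Function.LeftInverse (fun v : List ℕ => match v with
    | [] => ([] : List ℕ)
    | i :: w => (i - 1) :: w) shPos := by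
    intro v; cases v <;> simp [shPos]
  exact this.injective

theorem sh0_injective {P : Type} : Function.Injective (sh0 (P := P)) := by
  rintro ⟨p, v⟩ ⟨p', v'⟩ h
  simp [sh0] at h
  simp [h.1, h.2]

theorem shS_injective {P : Type} : Function.Injective (shS (P := P)) := by
  rintro ⟨p, v⟩ ⟨p', v'⟩ h
  simp only [shS, Prod.mk.injEq] at h
  exact Prod.ext h.1 (shPos_injective h.2)

theorem step_zero_iff {G : WTGc S Γ ar} {a : Γ} {t₀ : RTree Γ} {tr : List (RTree Γ)}
    {x : _} {ξ₀ : _} {ξr : _} {p : G.P} {w : List ℕ} {ζ : _} :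
    G.Step (RTree.node a (t₀ :: tr)) (RTree.node x (ξ₀ :: ξr)) p (0 :: w) ζ ↔
      ∃ ζ₀, G.Step t₀ ξ₀ p w ζ₀ ∧ ζ = RTree.node x (ζ₀ :: ξr) := by
  constructor
  · rintro ⟨h1, h2, s, hs, he, hn⟩
    rw [subtreeAt_cons] at h1 hs
    simp only [List.getElem?_cons_zero, Option.bind_some] at h1 hs
    rw [replaceAt_cons_zero] at h2
    exact ⟨_, ⟨h1, rfl, s, hs, he, hn⟩, h2⟩
  · rintro ⟨ζ₀, ⟨h1, h2, s, hs, he, hn⟩, rfl⟩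
    refine ⟨?_, ?_, s, ?_, he, hn⟩
    · rw [subtreeAt_cons]; simpa using h1
    · rw [replaceAt_cons_zero, ← h2]
    · rw [subtreeAt_cons]; simpa using hs

theorem step_succ_iff {G : WTGc S Γ ar} {a : Γ} {t₀ : RTree Γ} {tr : List (RTree Γ)}
    {x : _} {ξ₀ : _} {ξr : _} {p : G.P} {i : ℕ} {w : List ℕ} {ζ : _} :
    G.Step (RTree.node a (t₀ :: tr)) (RTree.node x (ξ₀ :: ξr)) p ((i+1) :: w) ζ ↔
      ∃ ζs, G.Step (RTree.node a tr) (RTree.node x ξr) p (i :: w) (RTree.node x ζs) ∧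
        ζ = RTree.node x (ξ₀ :: ζs) := by
  constructor
  · rintro ⟨h1, h2, s, hs, he, hn⟩
    rw [subtreeAt_cons] at h1 hs
    simp only [List.getElem?_cons_succ] at h1 hs
    rw [replaceAt_cons_succ] at h2
    refine ⟨_, ⟨?_, ?_, s, ?_, he, hn⟩, h2⟩
    · rw [subtreeAt_cons]; exact h1
    · rw [replaceAt_cons]
    · rw [subtreeAt_cons]; exact hs
  · rintro ⟨ζs, ⟨h1, h2, s, hs, he, hn⟩, rfl⟩
    rw [subtreeAt_cons] at h1 hs
    rw [replaceAt_cons] at h2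
    injection h2 with h2a h2b
    refine ⟨?_, ?_, s, ?_, he, hn⟩
    · rw [subtreeAt_cons]; simpa using h1
    · rw [replaceAt_cons_succ, ← h2b]
    · rw [subtreeAt_cons]; simpa using hs

theorem derF0 {G : WTGc S Γ ar} {t₀ : RTree Γ} {e : _} {ξ₀ η₀ : _}
    (h : G.Derives t₀ ξ₀ e η₀) (a : Γ) (tr : List (RTree Γ)) (x : _) (ξr : _) :
    G.Derives (RTree.node a (t₀ :: tr)) (RTree.node x (ξ₀ :: ξr)) (e.map sh0)
      (RTree.node x (η₀ :: ξr)) := by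
  induction h with
  | refl ξ => exact WTGc.Derives.refl _
  | step hs h' ih => exact WTGc.Derives.step (step_zero_iff.mpr ⟨_, hs, rfl⟩) ih

theorem derC0 {G : WTGc S Γ ar} {a : Γ} {t₀ : RTree Γ} {tr : List (RTree Γ)} {x : _} {ξr : _} :
    ∀ {d : List (G.P × List ℕ)} {ξ₀ η : _},
      G.Derives (RTree.node a (t₀ :: tr)) (RTree.node x (ξ₀ :: ξr)) d η →
      (∀ y ∈ d, ∃ w, y.2 = 0 :: w) →
      ∃ e η₀, d = e.map sh0 ∧ G.Derives t₀ ξ₀ e η₀ ∧ η = RTree.node x (η₀ :: ξr) := by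
  intro d
  induction d with
  | nil =>
    intro ξ₀ η h _
    exact ⟨[], ξ₀, rfl, WTGc.Derives.refl _, (derives_nil h rfl)⟩
  | cons y rest ih =>
    intro ξ₀ η h hp
    obtain ⟨p, w⟩ := y
    obtain ⟨w', hw⟩ := hp (p, w) (by simp)
    simp only at hw
    subst hw
    cases h with
    | step hs h' =>
      obtain ⟨ζ₀, hs₀, rfl⟩ := step_zero_iff.mp hs
      obtain ⟨e, η₀, rfl, hd, rfl⟩ := ih h' (fun y hy => hp y (by simp [hy]))
      exact ⟨(p, w') :: e, η₀, by simp [sh0], WTGc.Derives.step hs₀ hd, rfl⟩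

theorem derF1 {G : WTGc S Γ ar} {a : Γ} {t₀ : RTree Γ} {tr : List (RTree Γ)} {x : _} :
    ∀ {e : List (G.P × List ℕ)} {ξr ηr : _},
      G.Derives (RTree.node a tr) (RTree.node x ξr) e (RTree.node x ηr) →
      (∀ y ∈ e, y.2 ≠ ([] : List ℕ)) → ∀ (ξ₀ : _),
      G.Derives (RTree.node a (t₀ :: tr)) (RTree.node x (ξ₀ :: ξr)) (e.map shS)
        (RTree.node x (ξ₀ :: ηr)) := by
  intro e
  induction e with
  | nil =>
    intro ξr ηr h _ ξ₀
    have := derives_nil h rfl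
    injection this with h1 h2
    subst h2
    exact WTGc.Derives.refl _
  | cons y rest ih =>
    intro ξr ηr h hp ξ₀
    obtain ⟨p, w⟩ := y
    cases h with
    | step hs h' =>
      cases w with
      | nil => exact absurd rfl (hp (p, []) (by simp))
      | cons i w =>
        obtain ⟨ζs, hζ, -⟩ := step_cons_shape hs
        subst hζ
        have hstep : G.Step (RTree.node a (t₀ :: tr)) (RTree.node x (ξ₀ :: ξr)) p ((i+1) :: w)
            (RTree.node x (ξ₀ :: ζs)) := step_succ_iff.mpr ⟨ζs, hs, rfl⟩
        exact WTGc.Derives.step (ζ := RTree.node x (ξ₀ :: ζs)) hstep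
          (ih h' (fun y hy => hp y (by simp [hy])) ξ₀)

theorem derC1 {G : WTGc S Γ ar} {a : Γ} {t₀ : RTree Γ} {tr : List (RTree Γ)} {x : _} {ξ₀ : _} :
    ∀ {d : List (G.P × List ℕ)} {ξr η : _},
      G.Derives (RTree.node a (t₀ :: tr)) (RTree.node x (ξ₀ :: ξr)) d η →
      (∀ y ∈ d, ∃ i w, y.2 = (i+1) :: w) →
      ∃ e ηr, d = e.map shS ∧ (∀ y ∈ e, y.2 ≠ ([] : List ℕ)) ∧
        G.Derives (RTree.node a tr) (RTree.node x ξr) e (RTree.node x ηr) ∧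
        η = RTree.node x (ξ₀ :: ηr) := by
  intro d
  induction d with
  | nil =>
    intro ξr η h _
    exact ⟨[], ξr, rfl, by simp, WTGc.Derives.refl _, (derives_nil h rfl)⟩
  | cons y rest ih =>
    intro ξr η h hp
    obtain ⟨p, w⟩ := y
    obtain ⟨i, w', hw⟩ := hp (p, w) (by simp)
    simp only at hw
    subst hw
    cases h with
    | step hs h' =>
      obtain ⟨ζs, hs', rfl⟩ := step_succ_iff.mp hs
      obtain ⟨e, ηr, rfl, hne, hd, rfl⟩ := ih h' (fun y hy => hp y (by simp [hy]))
      refine ⟨(p, i :: w') :: e, ηr, by simp [shS, shPos], ?_, WTGc.Derives.step hs' hd, rfl⟩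
      intro y hy
      rcases List.mem_cons.mp hy with rfl | hy'
      · simp
      · exact hne y hy'


/-! ### Leftmost lemmas -/

theorem leftmost_nil {P : Type} : Leftmost ([] : List (P × List ℕ)) := by
  simp [Leftmost, List.Chain']

theorem leftmost_map_sh0 {P : Type} (d : List (P × List ℕ)) :
    Leftmost (d.map sh0) ↔ Leftmost d := by
  unfold Leftmost List.Chain'
  rw [List.map_map, show (Prod.snd ∘ sh0 (P := P)) = (fun v => 0 :: v) ∘ Prod.snd from rfl,
    ← List.map_map, List.isChain_map]
  exact ⟨fun h => h.imp (fun _ _ hab => posLt_zero_iff.mp hab),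
    fun h => h.imp (fun _ _ hab => posLt_zero_iff.mpr hab)⟩

theorem chain'_shPos : ∀ (l : List (List ℕ)), (∀ v ∈ l, v ≠ []) →
    (List.Chain' PosLt (l.map shPos) ↔ List.Chain' PosLt l) := by
  intro l
  induction l with
  | nil => simp
  | cons v l ih =>
    intro hp
    cases l with
    | nil => simp [List.Chain']
    | cons u l' =>
      have hv : v ≠ [] := hp v (by simp)
      have hu : u ≠ [] := hp u (by simp)
      obtain ⟨i, v', rfl⟩ : ∃ i v', v = i :: v' := by
        cases v with
        | nil => exact absurd rfl hv
        | cons i v' => exact ⟨i, v', rfl⟩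
      obtain ⟨j, u', rfl⟩ : ∃ j u', u = j :: u' := by
        cases u with
        | nil => exact absurd rfl hu
        | cons j u' => exact ⟨j, u', rfl⟩
      simp only [List.map_cons]
      rw [List.Chain', List.Chain', List.isChain_cons_cons, List.isChain_cons_cons]
      have h1 : shPos (i :: v') = (i+1) :: v' := rfl
      have h2 : shPos (j :: u') = (j+1) :: u' := rfl
      constructor
      · rintro ⟨ha, hb⟩
        refine ⟨by rw [h1, h2] at ha; exact posLt_succ_iff.mp ha, ?_⟩
        have := (ih (fun x hx => hp x (by simp [hx]))).mp
        exact this hb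
      · rintro ⟨ha, hb⟩
        refine ⟨by rw [h1, h2]; exact posLt_succ_iff.mpr ha, ?_⟩
        have := (ih (fun x hx => hp x (by simp [hx]))).mpr
        exact this hb

theorem leftmost_map_shS {P : Type} (d : List (P × List ℕ)) (hp : ∀ y ∈ d, y.2 ≠ ([] : List ℕ)) :
    Leftmost (d.map shS) ↔ Leftmost d := by
  unfold Leftmost
  rw [List.map_map, show (Prod.snd ∘ shS (P := P)) = shPos ∘ Prod.snd from rfl, ← List.map_map]
  exact chain'_shPos _ (by
    intro v hv
    obtain ⟨y, hy, rfl⟩ := List.mem_map.mp hv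
    exact hp y hy)

theorem leftmost_tail {P : Type} {y : P × List ℕ} {d : List (P × List ℕ)}
    (h : Leftmost (y :: d)) : Leftmost d := by
  unfold Leftmost at h ⊢
  rw [List.map_cons] at h
  exact h.tail

theorem chain_succ_heads : ∀ (l : List (List ℕ)) (k : ℕ) (w : List ℕ),
    List.Chain' PosLt (((k+1) :: w) :: l) → (∀ v ∈ l, v ≠ []) →
    ∀ v ∈ l, ∃ i w', v = (i+1) :: w' := by
  intro l
  induction l with
  | nil => intro _ _ _ _ v hv; simp at hv
  | cons u l' ih =>
    intro k w hc hp v hv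
    rw [List.Chain', List.isChain_cons_cons] at hc
    have hu : u ≠ [] := hp u (by simp)
    obtain ⟨j, u', rfl⟩ : ∃ j u', u = j :: u' := by
      cases u with
      | nil => exact absurd rfl hu
      | cons j u' => exact ⟨j, u', rfl⟩
    have hj : 1 ≤ j := by
      rcases posLt_cons_iff.mp hc.1 with h | ⟨h, -⟩ <;> omega
    obtain ⟨m, rfl⟩ : ∃ m, j = m + 1 := ⟨j - 1, by omega⟩
    rcases List.mem_cons.mp hv with rfl | hv'
    · exact ⟨m, u', rfl⟩
    · exact ih m u' hc.2 (fun x hx => hp x (by simp [hx])) v hv'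

theorem heads_split {P : Type} : ∀ (d : List (P × List ℕ)), Leftmost d →
    (∀ y ∈ d, y.2 ≠ ([] : List ℕ)) →
    ∃ d₀ d₁, d = d₀ ++ d₁ ∧ (∀ y ∈ d₀, ∃ w, y.2 = 0 :: w) ∧
      (∀ y ∈ d₁, ∃ i w, y.2 = (i+1) :: w) := by
  intro d
  induction d with
  | nil => exact fun _ _ => ⟨[], [], rfl, by simp, by simp⟩
  | cons y d ih =>
    intro hlm hp
    have hy : y.2 ≠ [] := hp y (by simp)
    obtain ⟨j, w, hw⟩ : ∃ j w, y.2 = j :: w := by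
      cases hyv : y.2 with
      | nil => exact absurd hyv hy
      | cons j w => exact ⟨j, w, rfl⟩
    cases j with
    | zero =>
      obtain ⟨d₀, d₁, rfl, h1, h2⟩ := ih (leftmost_tail hlm) (fun x hx => hp x (by simp [hx]))
      refine ⟨y :: d₀, d₁, rfl, ?_, h2⟩
      intro x hx
      rcases List.mem_cons.mp hx with rfl | hx'
      · exact ⟨w, hw⟩
      · exact h1 x hx'
    | succ k =>
      refine ⟨[], y :: d, rfl, by simp, ?_⟩
      intro v hv
      rcases List.mem_cons.mp hv with rfl | hv'
      · exact ⟨k, w, hw⟩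
      · have hc : List.Chain' PosLt (((k+1) :: w) :: d.map Prod.snd) := by
          have := hlm
          unfold Leftmost at this
          rw [List.map_cons, hw] at this
          exact this
        obtain ⟨i, w', hw'⟩ := chain_succ_heads (d.map Prod.snd) k w hc
          (by
            intro u hu
            obtain ⟨z, hz, rfl⟩ := List.mem_map.mp hu
            exact hp z (by simp [hz])) v.2 (List.mem_map.mpr ⟨v, hv', rfl⟩)
        exact ⟨i, w', hw'⟩

/-! ### Finiteness -/

def posSet {α : Type} (t : RTree α) : Set (List ℕ) := {w | (t.subtreeAt w).isSome}

theorem posSet_finite {α : Type} : ∀ t : RTree α, (posSet t).Finite := by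
  refine rtree_ind ?_
  intro a ts ih
  refine Set.Finite.subset (Set.Finite.insert []
    (Set.finite_iUnion (fun i : Fin ts.length =>
      ((ih _ (List.getElem_mem i.2)).image (fun w => i.1 :: w))))) ?_
  intro w hw
  cases w with
  | nil => exact Set.mem_insert _ _
  | cons i v =>
    simp only [posSet, Set.mem_setOf_eq, subtreeAt_cons] at hw
    cases h : ts[i]? with
    | none => rw [h] at hw; simp at hw
    | some c =>
      rw [h] at hw
      simp only [Option.bind_some] at hw
      obtain ⟨hi, hc⟩ := List.getElem?_eq_some_iff.mp h
      refine Set.mem_insert_iff.mpr (Or.inr (Set.mem_iUnion.mpr ⟨⟨i, hi⟩, ?_⟩))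
      exact ⟨v, by rw [hc]; exact hw, rfl⟩

theorem derives_pos_valid {G : WTGc S Γ ar} {t : RTree Γ} {ξ η : _} {d : _}
    (h : G.Derives t ξ d η) : ∀ y ∈ d, y.2 ∈ posSet t := by
  induction h with
  | refl => simp
  | @step ξ ζ η p w d hs hrest ih =>
    intro y hy
    rcases List.mem_cons.mp hy with rfl | hy'
    · obtain ⟨-, -, s, hs', -⟩ := hs
      simp only [posSet, Set.mem_setOf_eq, hs', Option.isSome_some]
    · exact ih y hy'

instance : IsTrans (List ℕ) PosLt := ⟨fun _ _ _ => posLt_trans⟩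

theorem leftmost_nodup {P : Type} (d : List (P × List ℕ)) (h : Leftmost d) :
    (d.map Prod.snd).Nodup := by
  have := List.isChain_iff_pairwise.mp h
  refine this.imp ?_
  intro a b hab he
  exact posLt_irrefl b (he ▸ hab)

theorem finite_lists {β : Type} {A : Set β} (hA : A.Finite) :
    ∀ n, {l : List β | l.length ≤ n ∧ ∀ x ∈ l, x ∈ A}.Finite := by
  intro n
  induction n with
  | zero =>
    refine Set.Finite.subset (Set.finite_singleton []) ?_
    rintro l ⟨h1, -⟩
    simp only [Set.mem_singleton_iff]
    exact List.length_eq_zero_iff.mp (by omega)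
  | succ n ih =>
    refine Set.Finite.subset (Set.Finite.insert [] (Set.Finite.image2 (· :: ·) hA ih)) ?_
    rintro l ⟨h1, h2⟩
    cases l with
    | nil => exact Set.mem_insert _ _
    | cons x l =>
      refine Set.mem_insert_iff.mpr (Or.inr ?_)
      exact Set.mem_image2.mpr ⟨x, h2 x (by simp), l,
        ⟨by simpa using h1, fun z hz => h2 z (by simp [hz])⟩, rfl⟩

theorem L_finite (G : WTGc S Γ ar) (t : RTree Γ) (ℓ : RTree (Γ ⊕ G.Q)) :
    (L G t ℓ).Finite := by
  classical
  haveI := G.finP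
  have hA : ((Set.univ : Set G.P) ×ˢ posSet t).Finite :=
    Set.Finite.prod Set.finite_univ (posSet_finite t)
  set F := (posSet_finite t).toFinset with hF
  refine Set.Finite.subset (finite_lists hA F.card) ?_
  rintro d ⟨hder, hlm⟩
  have hval := derives_pos_valid hder
  constructor
  · have hnd := leftmost_nodup d hlm
    have hsub : (d.map Prod.snd).toFinset ⊆ F := by
      intro v hv
      obtain ⟨y, hy, rfl⟩ := List.mem_map.mp (List.mem_toFinset.mp hv)
      exact (Set.Finite.mem_toFinset _).mpr (hval y hy)
    calc d.length = (d.map Prod.snd).length := by simp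
      _ = (d.map Prod.snd).toFinset.card := (List.toFinset_card_of_nodup hnd).symm
      _ ≤ F.card := Finset.card_le_card hsub
  · exact fun y hy => ⟨Set.mem_univ _, hval y hy⟩

/-! ### Sum over concatenations -/

theorem finsum_mem_mul_const {β : Type} {s : Set β} (hs : s.Finite) (f : β → S) (c : S) :
    ∑ᶠ x ∈ s, f x * c = (∑ᶠ x ∈ s, f x) * c := by
  rw [← hs.coe_toFinset, finsum_mem_coe_finset, finsum_mem_coe_finset, ← Finset.sum_mul]

theorem sum_cat {ι : Type} (w : List ι → S) (hw : ∀ a b, w (a ++ b) = w a * w b)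
    {A B : Set (List ι)} (hA : A.Finite) (hB : B.Finite)
    (hu : ∀ a ∈ A, ∀ a' ∈ A, ∀ (b : List ι), b ∈ B → ∀ b' ∈ B, a ++ b = a' ++ b' → a = a') :
    ∑ᶠ d ∈ Set.image2 (· ++ ·) A B, w d = (∑ᶠ a ∈ A, w a) * (∑ᶠ b ∈ B, w b) := by
  classical
  rw [← Set.image_prod]
  have hinj : Set.InjOn (fun x : List ι × List ι => x.1 ++ x.2) (A ×ˢ B) := by
    rintro ⟨a, b⟩ ⟨ha, hb⟩ ⟨a', b'⟩ ⟨ha', hb'⟩ h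
    simp only at h
    have h1 := hu a ha a' ha' b hb b' hb' h
    subst h1
    exact Prod.ext rfl (List.append_cancel_left h)
  rw [finsum_mem_image hinj]
  rw [show (A ×ˢ B : Set (List ι × List ι)) = ↑(hA.toFinset ×ˢ hB.toFinset) by
    rw [Finset.coe_product, hA.coe_toFinset, hB.coe_toFinset], finsum_mem_coe_finset]
  rw [Finset.sum_product]
  simp_rw [hw]
  rw [← Finset.sum_mul_sum]
  rw [← finsum_mem_coe_finset, ← finsum_mem_coe_finset, hA.coe_toFinset, hB.coe_toFinset]

/-! ### Root symbol of left-hand sides; NT-niceness -/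

theorem lhs_root (G : WTGc S Γ ar) (p : G.P) :
    ∃ b cs, G.lhs p = RTree.node (Sum.inl b) cs ∧ cs.length = ar b := by
  have hwf := G.lhs_wf p
  cases hℓ : G.lhs p with
  | node y cs =>
    rw [hℓ] at hwf
    cases hwf with
    | node h1 h2 =>
      cases y with
      | inl b => exact ⟨b, cs, rfl, h1⟩
      | inr q =>
        have : cs = [] := List.length_eq_zero_iff.mp h1
        subst this
        exact absurd hℓ (G.lhs_ne p q)

/-- All `inr`-labelled nodes are leaves. -/
inductive NTnice {α Q : Type} : RTree (α ⊕ Q) → Prop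
  | inr (q : Q) : NTnice (RTree.node (Sum.inr q) [])
  | inl (a : α) (ts : List (RTree (α ⊕ Q))) :
      (∀ c ∈ ts, NTnice c) → NTnice (RTree.node (Sum.inl a) ts)

theorem wf_ntnice {Q : Type} (arQ : (Γ ⊕ Q) → ℕ) (hQ : ∀ q : Q, arQ (Sum.inr q) = 0) :
    ∀ {ℓ : RTree (Γ ⊕ Q)}, ℓ.WF arQ → NTnice ℓ := by
  have : ∀ ℓ : RTree (Γ ⊕ Q), ℓ.WF arQ → NTnice ℓ := by
    refine rtree_ind ?_
    intro y ts ih hwf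
    cases hwf with
    | node h1 h2 =>
      cases y with
      | inl a => exact NTnice.inl a ts (fun c hc => ih c hc (h2 c hc))
      | inr q =>
        have : ts = [] := List.length_eq_zero_iff.mp (by rw [h1, hQ])
        subst this
        exact NTnice.inr q
  exact fun {ℓ} => this ℓ

/-! ### Top-level recursion for `qWeight` -/

theorem top (G : WTGc S Γ ar) (q : G.Q) (t : RTree Γ) :
    G.qWeight q t = ∑ᶠ p ∈ {p : G.P | G.tgt p = q ∧ COK G p t},
      G.wt p * (∑ᶠ d ∈ L G t (G.lhs p), G.wtD d) := by
  classical
  haveI := G.finP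
  obtain ⟨a, ts⟩ := t
  set t := RTree.node a ts with ht
  set E : G.P → Set (List (G.P × List ℕ)) := fun p =>
    {d | G.tgt p = q ∧ COK G p t ∧ ∃ d' ∈ L G t (G.lhs p), d = d' ++ [(p, ([] : List ℕ))]}
    with hE
  have hpos : ∀ p : G.P, ∀ d' ∈ L G t (G.lhs p), ∀ y ∈ d', y.2 ≠ ([] : List ℕ) := by
    intro p d' hd' y hy
    obtain ⟨b, cs, hb, -⟩ := lhs_root G p
    have h1 := hd'.1
    rw [ht, map_node, hb] at h1
    exact (derives_root_inl h1).2.2 y hy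
  have hDE : G.D q t = ⋃ p, E p := by
    ext d
    constructor
    · rintro ⟨hder, hlm⟩
      rw [ht, map_node] at hder
      obtain ⟨d', p, rfl, -, h3, h4, h5⟩ := derives_to_nt hder
      refine Set.mem_iUnion.mpr ⟨p, h3, h4, d', ⟨?_, ?_⟩, rfl⟩
      · rw [ht, map_node]; exact h5
      · unfold Leftmost at hlm ⊢
        rw [List.map_append] at hlm
        exact (List.isChain_append.mp hlm).1
    · intro hd
      obtain ⟨p, h1, h2, d', hd', rfl⟩ := Set.mem_iUnion.mp hd
      constructor
      · refine derives_trans hd'.1 ?_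
        rw [← h1]
        exact WTGc.Derives.step (step_nil_intro p t h2) (WTGc.Derives.refl _)
      · unfold Leftmost
        rw [List.map_append, List.Chain', List.isChain_append]
        refine ⟨hd'.2, by simp [Leftmost, List.Chain'], ?_⟩
        intro v hv u hu
        simp only [List.map_cons, List.map_nil, List.head?_cons, Option.mem_def,
          Option.some_inj] at hu
        subst hu
        have hvm : v ∈ d'.map Prod.snd := List.mem_of_mem_getLast? hv
        obtain ⟨y, hy, rfl⟩ := List.mem_map.mp hvm
        exact posLt_nil_of_ne (hpos p d' hd' y hy)
  have hdisj : Pairwise (Function.onFun Disjoint E) := by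
    intro p p' hne
    rw [Function.onFun, Set.disjoint_left]
    rintro d ⟨-, -, d1, -, rfl⟩ ⟨-, -, d2, -, heq⟩
    have h1 := List.getLast?_concat (l := d1) (a := (p, ([] : List ℕ)))
    have h2 := List.getLast?_concat (l := d2) (a := (p', ([] : List ℕ)))
    rw [← heq, h1, Option.some_inj] at h2
    exact hne (congrArg Prod.fst h2)
  have hfin : ∀ p, (E p).Finite := by
    intro p
    refine Set.Finite.subset ((L_finite G t (G.lhs p)).image (fun d' => d' ++ [(p, ([] : List ℕ))])) ?_
    rintro d ⟨-, -, d', hd', rfl⟩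
    exact ⟨d', hd', rfl⟩
  rw [WTGc.qWeight, hDE, finsum_mem_iUnion hdisj hfin]
  apply finsum_congr
  intro p
  by_cases hc : G.tgt p = q ∧ COK G p t
  · have hEp : E p = (fun d' => d' ++ [(p, ([] : List ℕ))]) '' L G t (G.lhs p) := by
      ext d
      simp only [hE, Set.mem_setOf_eq, Set.mem_image]
      constructor
      · rintro ⟨-, -, d', h1, rfl⟩; exact ⟨d', h1, rfl⟩
      · rintro ⟨d', h1, rfl⟩; exact ⟨hc.1, hc.2, d', h1, rfl⟩
    rw [hEp, finsum_mem_image (fun x _ y _ h => List.append_cancel_right h)]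
    have hwt : ∀ d' : List (G.P × List ℕ), G.wtD (d' ++ [(p, ([] : List ℕ))]) = G.wtD d' * G.wt p := by
      intro d'
      rw [wtD_append]
      simp [WTGc.wtD]
    simp_rw [hwt]
    rw [finsum_mem_mul_const (L_finite G t (G.lhs p))]
    rw [finsum_eq_if]
    rw [if_pos (show p ∈ {p : G.P | G.tgt p = q ∧ COK G p t} from hc)]
    exact mul_comm _ _
  · have hEp : E p = ∅ := by
      ext d
      simp only [hE, Set.mem_setOf_eq, Set.mem_empty_iff_false, iff_false, not_and]
      intro h1 h2
      exact absurd ⟨h1, h2⟩ hc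
    rw [hEp, finsum_mem_empty, finsum_eq_if,
      if_neg (show p ∉ {p : G.P | G.tgt p = q ∧ COK G p t} from hc)]


/-! ### The function `Bfun` and the recursion lemma -/

theorem zipWith_attach {α β γ : Type} (l : List α) (l' : List β) (g : α → β → γ) :
    List.zipWith (fun (c : {x // x ∈ l}) u => g c.1 u) l.attach l' = List.zipWith g l l' := by
  have h : List.map Subtype.val l.attach = l := by
    simpa using List.attach_map_coe l id
  conv_rhs => rw [← h, List.zipWith_map_left]

open Classical in
/-- The expected weight of rewriting `t` to the sentential form `ℓ`. -/
noncomputable def Bfun (G : WTGc S Γ ar) : RTree (Γ ⊕ G.Q) → RTree Γ → S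
  | RTree.node (Sum.inr q) _, t => G.qWeight q t
  | RTree.node (Sum.inl a) ℓs, RTree.node b ts =>
      if a = b ∧ ℓs.length = ts.length then
        (List.zipWith (fun (c : {x // x ∈ ℓs}) u => Bfun G c.1 u) ℓs.attach ts).prod
      else 0
termination_by ℓ _ => sizeOf ℓ
decreasing_by
  simp_wf
  have := List.sizeOf_lt_of_mem c.2
  omega

theorem Bfun_inr (G : WTGc S Γ ar) (q : G.Q) (c : _) (t : RTree Γ) :
    Bfun G (RTree.node (Sum.inr q) c) t = G.qWeight q t := by
  rw [Bfun]

open Classical in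
theorem Bfun_node (G : WTGc S Γ ar) (a : Γ) (ℓs : List (RTree (Γ ⊕ G.Q))) (b : Γ)
    (ts : List (RTree Γ)) :
    Bfun G (RTree.node (Sum.inl a) ℓs) (RTree.node b ts)
      = if a = b ∧ ℓs.length = ts.length then (List.zipWith (Bfun G) ℓs ts).prod else 0 := by
  rw [Bfun, zipWith_attach]

theorem L_pos_ne (G : WTGc S Γ ar) {a : Γ} {ts : _} {b : Γ} {ℓs : _} :
    ∀ d ∈ L G (RTree.node a ts) (RTree.node (Sum.inl b) ℓs), ∀ y ∈ d, y.2 ≠ ([] : List ℕ) := by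
  rintro d ⟨hder, -⟩
  rw [map_node] at hder
  exact (derives_root_inl hder).2.2

theorem L_root_mismatch (G : WTGc S Γ ar) {a b : Γ} {ts : _} {ℓs : _}
    (hc : ¬ (b = a ∧ ℓs.length = ts.length)) :
    L G (RTree.node a ts) (RTree.node (Sum.inl b) ℓs) = ∅ := by
  ext d
  simp only [Set.mem_empty_iff_false, iff_false]
  rintro ⟨hder, -⟩
  rw [map_node] at hder
  obtain ⟨h1, h2, -⟩ := derives_root_inl hder
  injection h1 with h1
  rw [List.length_map] at h2
  exact hc ⟨h1.symm, h2⟩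

theorem L_nil_nil (G : WTGc S Γ ar) (a : Γ) :
    L G (RTree.node a []) (RTree.node (Sum.inl a) []) = {[]} := by
  ext d
  simp only [Set.mem_singleton_iff]
  constructor
  · rintro ⟨hder, -⟩
    rw [map_node, List.map_nil] at hder
    cases d with
    | nil => rfl
    | cons y rest =>
      obtain ⟨p, w⟩ := y
      cases hder with
      | step hs h' =>
        cases w with
        | nil =>
          obtain ⟨-, hζ, -⟩ := step_nil_elim hs
          subst hζ
          obtain ⟨-, hη⟩ := derives_from_nt h'
          exact absurd hη (by simp)
        | cons i w =>
          obtain ⟨h1, -, -⟩ := hs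
          rw [subtreeAt_cons] at h1
          simp at h1
  · rintro rfl
    refine ⟨?_, leftmost_nil⟩
    rw [map_node, List.map_nil]
    exact WTGc.Derives.refl _

theorem append_eq_of_pred {β : Type} (P : β → Prop) :
    ∀ (a a' b b' : List β), (∀ x ∈ a, P x) → (∀ x ∈ a', P x) →
      (∀ x ∈ b, ¬ P x) → (∀ x ∈ b', ¬ P x) → a ++ b = a' ++ b' → a = a' := by
  intro a
  induction a with
  | nil =>
    intro a' b b' _ ha' hb _ h
    cases a' with
    | nil => rfl
    | cons x' a' =>
      exfalso
      have : x' ∈ b := by rw [List.nil_append] at h; rw [h]; simp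
      exact hb x' this (ha' x' (by simp))
  | cons x a ih =>
    intro a' b b' ha ha' hb hb' h
    cases a' with
    | nil =>
      exfalso
      have : x ∈ b' := by
        rw [List.nil_append] at h
        rw [← h]; simp
      exact hb' x this (ha x (by simp))
    | cons x' a'' =>
      simp only [List.cons_append, List.cons.injEq] at h
      rw [h.1, ih a'' b b' (fun z hz => ha z (by simp [hz])) (fun z hz => ha' z (by simp [hz]))
        hb hb' h.2]

open Classical in
theorem rec_inner (G : WTGc S Γ ar) (a : Γ) :
    ∀ (ts : List (RTree Γ)) (ℓs : List (RTree (Γ ⊕ G.Q))) (b : Γ),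
      (∀ c ∈ ℓs, NTnice c) →
      (∀ u ∈ ts, ∀ ℓ : RTree (Γ ⊕ G.Q), NTnice ℓ → ∑ᶠ d ∈ L G u ℓ, G.wtD d = Bfun G ℓ u) →
      ∑ᶠ d ∈ L G (RTree.node a ts) (RTree.node (Sum.inl b) ℓs), G.wtD d
        = Bfun G (RTree.node (Sum.inl b) ℓs) (RTree.node a ts) := by
  intro ts
  induction ts with
  | nil =>
    intro ℓs b _ _
    rw [Bfun_node]
    by_cases hc : b = a ∧ ℓs.length = ([] : List (RTree Γ)).length
    · obtain ⟨rfl, hl⟩ := hc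
      have hl' : ℓs = [] := List.length_eq_zero_iff.mp (by simpa using hl)
      subst hl'
      rw [L_nil_nil, finsum_mem_singleton, if_pos ⟨rfl, rfl⟩]
      simp [WTGc.wtD]
    · rw [L_root_mismatch G hc, finsum_mem_empty, if_neg hc]
  | cons t₀ tr ih =>
    intro ℓs b hnice hrec
    cases ℓs with
    | nil =>
      have hc : ¬ (b = a ∧ (([] : List (RTree (Γ ⊕ G.Q))).length = (t₀ :: tr).length)) := by
        simp
      rw [L_root_mismatch G hc, finsum_mem_empty, Bfun_node, if_neg hc]
    | cons ℓ₀ ℓr =>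
      by_cases hb : b = a
      · subst hb
        -- the decomposition of the derivation set
        have hset : L G (RTree.node b (t₀ :: tr)) (RTree.node (Sum.inl b) (ℓ₀ :: ℓr))
            = Set.image2 (· ++ ·) (List.map sh0 '' L G t₀ ℓ₀)
                (List.map shS '' L G (RTree.node b tr) (RTree.node (Sum.inl b) ℓr)) := by
          ext d
          constructor
          · rintro ⟨hder, hlm⟩
            have hne : ∀ y ∈ d, y.2 ≠ ([] : List ℕ) := by
              have h0 := hder
              rw [map_node] at h0
              exact (derives_root_inl h0).2.2
            obtain ⟨d₀, d₁, rfl, h0s, h1s⟩ := heads_split d hlm hne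
            rw [map_node, List.map_cons] at hder
            obtain ⟨κ, hκ1, hκ2⟩ := derives_append_split hder
            obtain ⟨e₀, η₀, rfl, he₀, rfl⟩ := derC0 hκ1 h0s
            obtain ⟨e₁, ηr, rfl, hne1, he₁, hη⟩ := derC1 hκ2 h1s
            injection hη with hy hl
            injection hl with hl1 hl2
            subst hl1; subst hl2
            have hlm0 : Leftmost (e₀.map sh0) := by
              unfold Leftmost at hlm ⊢
              rw [List.map_append] at hlm
              exact (List.isChain_append.mp hlm).1
            have hlm1 : Leftmost (e₁.map shS) := by
              unfold Leftmost at hlm ⊢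
              rw [List.map_append] at hlm
              exact (List.isChain_append.mp hlm).2.1
            refine Set.mem_image2.mpr ⟨e₀.map sh0, ⟨e₀, ⟨he₀, ?_⟩, rfl⟩,
              e₁.map shS, ⟨e₁, ⟨?_, ?_⟩, rfl⟩, rfl⟩
            · exact (leftmost_map_sh0 e₀).mp hlm0
            · rw [map_node]
              exact he₁
            · exact (leftmost_map_shS e₁ hne1).mp hlm1
          · intro hd
            obtain ⟨d₀, hd₀, d₁, hd₁, rfl⟩ := Set.mem_image2.mp hd
            obtain ⟨e₀, he₀m, rfl⟩ := hd₀
            obtain ⟨e₁, he₁m, rfl⟩ := hd₁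
            obtain ⟨hder0, hlm0⟩ := he₀m
            obtain ⟨hder1, hlm1⟩ := he₁m
            have hne1 : ∀ y ∈ e₁, y.2 ≠ ([] : List ℕ) := by
              have h0 := hder1
              rw [map_node] at h0
              exact (derives_root_inl h0).2.2
            constructor
            · rw [map_node, List.map_cons]
              refine derives_trans (derF0 hder0 b tr _ _) ?_
              have hder1' := hder1
              rw [map_node] at hder1'
              exact derF1 hder1' hne1 ℓ₀
            · unfold Leftmost
              rw [List.map_append, List.Chain', List.isChain_append]
              refine ⟨(leftmost_map_sh0 e₀).mpr hlm0, (leftmost_map_shS e₁ hne1).mpr hlm1, ?_⟩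
              intro v hv u hu
              have hvm : v ∈ (e₀.map sh0).map Prod.snd := List.mem_of_mem_getLast? hv
              have hum : u ∈ (e₁.map shS).map Prod.snd := List.mem_of_mem_head? hu
              obtain ⟨y, hy, rfl⟩ := List.mem_map.mp hvm
              obtain ⟨z, hz, rfl⟩ := List.mem_map.mp hum
              obtain ⟨y', -, rfl⟩ := List.mem_map.mp hy
              obtain ⟨z', hz', rfl⟩ := List.mem_map.mp hz
              have hz'ne : z'.2 ≠ [] := hne1 z' hz'
              obtain ⟨i, w', hw'⟩ : ∃ i w', z'.2 = i :: w' := by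
                cases hzz : z'.2 with
                | nil => exact absurd hzz hz'ne
                | cons i w' => exact ⟨i, w', rfl⟩
              show PosLt (sh0 y').2 (shS z').2
              rw [show (sh0 y').2 = 0 :: y'.2 from rfl, show (shS z').2 = shPos z'.2 from rfl,
                hw', show shPos (i :: w') = (i+1) :: w' from rfl]
              exact PosLt.head _ _ (by omega)
        have finA : (List.map sh0 '' L G t₀ ℓ₀).Finite := (L_finite G t₀ ℓ₀).image _
        have finB : (List.map shS '' L G (RTree.node b tr) (RTree.node (Sum.inl b) ℓr)).Finite :=
          (L_finite G _ _).image _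
        have huniq : ∀ x ∈ List.map sh0 '' L G t₀ ℓ₀, ∀ x' ∈ List.map sh0 '' L G t₀ ℓ₀,
            ∀ (y : List (G.P × List ℕ)),
            y ∈ List.map shS '' L G (RTree.node b tr) (RTree.node (Sum.inl b) ℓr) →
            ∀ y' ∈ List.map shS '' L G (RTree.node b tr) (RTree.node (Sum.inl b) ℓr),
            x ++ y = x' ++ y' → x = x' := by
          rintro x ⟨e, -, rfl⟩ x' ⟨e', -, rfl⟩ y ⟨f, hf, rfl⟩ y' ⟨f', hf', rfl⟩ h
          refine append_eq_of_pred (fun z => ∃ w, z.2 = 0 :: w) _ _ _ _ ?_ ?_ ?_ ?_ h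
          · rintro z hz
            obtain ⟨z', -, rfl⟩ := List.mem_map.mp hz
            exact ⟨z'.2, rfl⟩
          · rintro z hz
            obtain ⟨z', -, rfl⟩ := List.mem_map.mp hz
            exact ⟨z'.2, rfl⟩
          · rintro z hz ⟨w, hw⟩
            obtain ⟨z', hz', rfl⟩ := List.mem_map.mp hz
            have : z'.2 ≠ [] := L_pos_ne G f hf z' hz'
            obtain ⟨i, w', hw'⟩ : ∃ i w', z'.2 = i :: w' := by
              cases hzz : z'.2 with
              | nil => exact absurd hzz this
              | cons i w' => exact ⟨i, w', rfl⟩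
            rw [show (shS z').2 = shPos z'.2 from rfl, hw'] at hw
            exact absurd hw (by simp [shPos])
          · rintro z hz ⟨w, hw⟩
            obtain ⟨z', hz', rfl⟩ := List.mem_map.mp hz
            have : z'.2 ≠ [] := L_pos_ne G f' hf' z' hz'
            obtain ⟨i, w', hw'⟩ : ∃ i w', z'.2 = i :: w' := by
              cases hzz : z'.2 with
              | nil => exact absurd hzz this
              | cons i w' => exact ⟨i, w', rfl⟩
            rw [show (shS z').2 = shPos z'.2 from rfl, hw'] at hw
            exact absurd hw (by simp [shPos])
        rw [hset, sum_cat G.wtD (wtD_append G) finA finB huniq]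
        rw [finsum_mem_image ((List.map_injective_iff.mpr sh0_injective).injOn),
          finsum_mem_image ((List.map_injective_iff.mpr shS_injective).injOn)]
        have hw0 : ∀ e : List (G.P × List ℕ), G.wtD (e.map sh0) = G.wtD e :=
          fun e => wtD_map_shift G (fun v => 0 :: v) e
        have hw1 : ∀ e : List (G.P × List ℕ), G.wtD (e.map shS) = G.wtD e :=
          fun e => wtD_map_shift G shPos e
        simp_rw [hw0, hw1]
        have hL0 : ∑ᶠ d ∈ L G t₀ ℓ₀, G.wtD d = Bfun G ℓ₀ t₀ :=
          hrec t₀ (by simp) ℓ₀ (hnice ℓ₀ (by simp))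
        have hL1 : ∑ᶠ d ∈ L G (RTree.node b tr) (RTree.node (Sum.inl b) ℓr), G.wtD d
            = Bfun G (RTree.node (Sum.inl b) ℓr) (RTree.node b tr) :=
          ih ℓr b (fun c hc => hnice c (by simp [hc])) (fun u hu => hrec u (by simp [hu]))
        rw [hL0, hL1, Bfun_node, Bfun_node]
        by_cases hlen : ℓr.length = tr.length
        · rw [if_pos ⟨rfl, hlen⟩, if_pos ⟨rfl, by simp [hlen]⟩, List.zipWith_cons_cons,
            List.prod_cons]
        · rw [if_neg (by simp [hlen]), if_neg (by simp [hlen]), mul_zero]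
      · have hc : ¬ (b = a ∧ (ℓ₀ :: ℓr).length = (t₀ :: tr).length) := fun h => hb h.1
        rw [L_root_mismatch G hc, finsum_mem_empty, Bfun_node, if_neg hc]

theorem rec_lemma (G : WTGc S Γ ar) :
    ∀ (t : RTree Γ) (ℓ : RTree (Γ ⊕ G.Q)), NTnice ℓ →
      ∑ᶠ d ∈ L G t ℓ, G.wtD d = Bfun G ℓ t := by
  have H : ∀ (n : ℕ) (t : RTree Γ), sizeOf t = n → ∀ ℓ : RTree (Γ ⊕ G.Q), NTnice ℓ →
      ∑ᶠ d ∈ L G t ℓ, G.wtD d = Bfun G ℓ t := by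
    intro n
    induction n using Nat.strong_induction_on with
    | _ n ihn =>
      intro t htn ℓ hnt
      cases hnt with
      | inr q =>
        rw [← D_eq_L, Bfun_inr]
        rfl
      | inl b ℓs hch =>
        obtain ⟨a, ts⟩ := t
        refine rec_inner G a ts ℓs b hch ?_
        intro u hu ℓ' hnt'
        have hlt : sizeOf u < n := by
          rw [← htn]
          have := List.sizeOf_lt_of_mem hu
          simp only [RTree.node.sizeOf_spec]
          omega
        exact ihn (sizeOf u) hlt u rfl ℓ' hnt'
  exact fun t ℓ h => H (sizeOf t) t rfl ℓ h

/-- The fundamental recursion: the weight of `t` at `q` as a sum over root productions. -/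
theorem topB (G : WTGc S Γ ar) (q : G.Q) (t : RTree Γ) :
    G.qWeight q t = ∑ᶠ p ∈ {p : G.P | G.tgt p = q ∧ COK G p t},
      G.wt p * Bfun G (G.lhs p) t := by
  rw [top]
  apply finsum_congr
  intro p
  apply finsum_congr
  intro _
  rw [rec_lemma G t (G.lhs p) (wf_ntnice _ (fun _ => rfl) (G.lhs_wf p))]


/-! ### The constructed WTAc -/

theorem wf_subtree {α : Type} {f : α → ℕ} :
    ∀ (w : List ℕ) (t s : RTree α), t.WF f → t.subtreeAt w = some s → s.WF f := by
  intro w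
  induction w with
  | nil =>
    intro t s hwf h
    rw [subtreeAt_nil, Option.some_inj] at h
    exact h ▸ hwf
  | cons i w ih =>
    intro t s hwf h
    cases t with
    | node a ts =>
      rw [subtreeAt_cons] at h
      cases hg : ts[i]? with
      | none => rw [hg] at h; simp at h
      | some c =>
        rw [hg] at h
        simp only [Option.bind_some] at h
        obtain ⟨hi, hc⟩ := List.getElem?_eq_some_iff.mp hg
        cases hwf with
        | node h1 h2 =>
          exact ih c s (h2 c (hc ▸ List.getElem_mem hi)) h

/-- `w` is an internal (`inl`-labelled) position of the left-hand side of `p`. -/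
def IPos (G : WTGc S Γ ar) (p : G.P) (w : List ℕ) : Prop :=
  ∃ (b : Γ) (cs : List (RTree (Γ ⊕ G.Q))),
    (G.lhs p).subtreeAt w = some (RTree.node (Sum.inl b) cs)

theorem ipos_finite (G : WTGc S Γ ar) (p : G.P) : Finite {w : List ℕ // IPos G p w} := by
  have hsub : {w | IPos G p w} ⊆ posSet (G.lhs p) := by
    rintro w ⟨b, cs, h⟩
    simp [posSet, h]
  exact ((posSet_finite (G.lhs p)).subset hsub).to_subtype

/-- Nonterminal indices of the constructed automaton. -/
def PIdx (G : WTGc S Γ ar) : Type := Σ p : G.P, {w : List ℕ // IPos G p w}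

theorem pidx_finite (G : WTGc S Γ ar) : Finite (PIdx G) := by
  haveI := G.finP
  haveI : ∀ p : G.P, Finite {w : List ℕ // IPos G p w} := fun p => ipos_finite G p
  exact Finite.instSigma

theorem root_ipos (G : WTGc S Γ ar) (p : G.P) : IPos G p [] := by
  obtain ⟨b, cs, hb, -⟩ := lhs_root G p
  exact ⟨b, cs, by rw [subtreeAt_nil, hb]⟩

noncomputable def pSym (G : WTGc S Γ ar) (x : PIdx G) : Γ := x.2.2.choose

noncomputable def pChild (G : WTGc S Γ ar) (x : PIdx G) : List (RTree (Γ ⊕ G.Q)) :=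
  x.2.2.choose_spec.choose

theorem pSpec (G : WTGc S Γ ar) (x : PIdx G) :
    (G.lhs x.1).subtreeAt x.2.1 = some (RTree.node (Sum.inl (pSym G x)) (pChild G x)) :=
  x.2.2.choose_spec.choose_spec

theorem pChild_ipos (G : WTGc S Γ ar) {x : PIdx G} {j : ℕ} {b' : Γ} {cs' : _}
    (h : (pChild G x)[j]? = some (RTree.node (Sum.inl b') cs')) :
    IPos G x.1 (x.2.1 ++ [j]) := by
  refine ⟨b', cs', ?_⟩
  rw [subtreeAt_append, pSpec, Option.bind_some, subtreeAt_cons, h]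
  simp

noncomputable def childNT (G : WTGc S Γ ar) (x : PIdx G) (j : ℕ) :
    G.Q ⊕ {y : PIdx G // y.2.1 ≠ []} :=
  match h : (pChild G x)[j]? with
  | some (RTree.node (Sum.inr q) _) => Sum.inl q
  | some (RTree.node (Sum.inl _) _) =>
      Sum.inr ⟨⟨x.1, ⟨x.2.1 ++ [j], pChild_ipos G h⟩⟩, by simp⟩
  | none => Sum.inl (G.tgt x.1)

theorem childNT_inr (G : WTGc S Γ ar) {x : PIdx G} {j : ℕ} {q : G.Q} {tl : _}
    (h : (pChild G x)[j]? = some (RTree.node (Sum.inr q) tl)) :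
    childNT G x j = Sum.inl q := by
  unfold childNT
  split
  · rename_i q' tl' h'
    rw [h] at h'
    injection h' with h'
    injection h' with h1 h2
    injection h1 with h1
    rw [h1]
  · rename_i b' cs' h'
    rw [h] at h'
    injection h' with h'
    injection h' with h1 h2
    exact absurd h1 (by simp)
  · rename_i h'
    rw [h] at h'
    exact absurd h' (by simp)

theorem childNT_inl (G : WTGc S Γ ar) {x : PIdx G} {j : ℕ} {b' : Γ} {cs' : _}
    (h : (pChild G x)[j]? = some (RTree.node (Sum.inl b') cs'))
    (hip : IPos G x.1 (x.2.1 ++ [j])) :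
    childNT G x j = Sum.inr ⟨⟨x.1, ⟨x.2.1 ++ [j], hip⟩⟩, by simp⟩ := by
  unfold childNT
  split
  · rename_i q' tl' h'
    rw [h] at h'
    injection h' with h'
    injection h' with h1 h2
    exact absurd h1 (by simp)
  · rfl
  · rename_i h'
    rw [h] at h'
    exact absurd h' (by simp)

open Classical in
/-- The constructed WTAc. -/
noncomputable def GW (G : WTGc S Γ ar) : WTGc S Γ ar where
  Q := G.Q ⊕ {y : PIdx G // y.2.1 ≠ []}
  P := PIdx G
  finQ := by
    haveI := G.finQ
    haveI := pidx_finite G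
    infer_instance
  finP := pidx_finite G
  final := Sum.elim G.final fun _ => 0
  lhs x := RTree.node (Sum.inl (pSym G x))
    (List.ofFn fun j : Fin (pChild G x).length => RTree.node (Sum.inr (childNT G x j.1)) [])
  tgt x := if h : x.2.1 = [] then Sum.inl (G.tgt x.1) else Sum.inr ⟨x, h⟩
  eqc x := if x.2.1 = [] then G.eqc x.1 else ∅
  nec x := if x.2.1 = [] then G.nec x.1 else ∅
  wt x := if x.2.1 = [] then G.wt x.1 else 1
  lhs_wf x := by
    refine RTree.WF.node ?_ ?_
    · rw [List.length_ofFn]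
      have hwf := wf_subtree x.2.1 (G.lhs x.1) _ (G.lhs_wf x.1) (pSpec G x)
      cases hwf with
      | node h1 h2 => exact h1
    · intro c hc
      rw [List.mem_ofFn] at hc
      obtain ⟨j, rfl⟩ := hc
      exact RTree.WF.node rfl (by simp)
  lhs_ne x q := by
    intro h
    injection h with h1 h2
    exact Sum.inl_ne_inr h1

theorem GW_lhs (G : WTGc S Γ ar) (x : PIdx G) :
    (GW G).lhs x = RTree.node (Sum.inl (pSym G x))
      (List.ofFn fun j : Fin (pChild G x).length =>
        RTree.node (Sum.inr (childNT G x j.1)) []) := rfl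

theorem GW_tgt_nil (G : WTGc S Γ ar) (x : PIdx G) (h : x.2.1 = []) :
    (GW G).tgt x = Sum.inl (G.tgt x.1) := dif_pos h

theorem GW_tgt_ne (G : WTGc S Γ ar) (x : PIdx G) (h : ¬ x.2.1 = []) :
    (GW G).tgt x = Sum.inr ⟨x, h⟩ := dif_neg h

theorem GW_eqc_nil (G : WTGc S Γ ar) (x : PIdx G) (h : x.2.1 = []) :
    (GW G).eqc x = G.eqc x.1 := if_pos h

theorem GW_eqc_ne (G : WTGc S Γ ar) (x : PIdx G) (h : ¬ x.2.1 = []) :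
    (GW G).eqc x = ∅ := if_neg h

theorem GW_nec_nil (G : WTGc S Γ ar) (x : PIdx G) (h : x.2.1 = []) :
    (GW G).nec x = G.nec x.1 := if_pos h

theorem GW_nec_ne (G : WTGc S Γ ar) (x : PIdx G) (h : ¬ x.2.1 = []) :
    (GW G).nec x = ∅ := if_neg h

theorem GW_wt_nil (G : WTGc S Γ ar) (x : PIdx G) (h : x.2.1 = []) :
    (GW G).wt x = G.wt x.1 := if_pos h

theorem GW_wt_ne (G : WTGc S Γ ar) (x : PIdx G) (h : ¬ x.2.1 = []) :
    (GW G).wt x = 1 := if_neg h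

theorem COK_GW_nil (G : WTGc S Γ ar) (x : PIdx G) (h : x.2.1 = []) (t : RTree Γ) :
    COK (GW G) x t ↔ COK G x.1 t := by
  unfold COK
  rw [GW_eqc_nil G x h, GW_nec_nil G x h]

theorem COK_GW_ne (G : WTGc S Γ ar) (x : PIdx G) (h : ¬ x.2.1 = []) (t : RTree Γ) :
    COK (GW G) x t := by
  constructor
  · intro c hc
    rw [GW_eqc_ne G x h] at hc
    simp at hc
  · intro c hc
    rw [GW_nec_ne G x h] at hc
    simp at hc

theorem GW_isWTAc (G : WTGc S Γ ar) : (GW G).IsWTAc := by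
  intro x
  refine ⟨pSym G x, List.ofFn (fun j : Fin (pChild G x).length => childNT G x j.1), ?_⟩
  erw [GW_lhs, List.map_ofFn]
  rfl

theorem GW_positive (G : WTGc S Γ ar) (h : G.Positive) : (GW G).Positive := by
  intro x
  by_cases hx : x.2.1 = []
  · rw [GW_nec_nil G x hx]; exact h x.1
  · exact GW_nec_ne G x hx

/-! ### The main induction -/

theorem main (G : WTGc S Γ ar) : ∀ t : RTree Γ,
    (∀ q : G.Q, (GW G).qWeight (Sum.inl q) t = G.qWeight q t) ∧
    (∀ (x : PIdx G) (hx : x.2.1 ≠ []),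
      (GW G).qWeight (Sum.inr ⟨x, hx⟩) t
        = Bfun G (RTree.node (Sum.inl (pSym G x)) (pChild G x)) t) := by
  have H : ∀ (n : ℕ) (t : RTree Γ), sizeOf t = n →
      (∀ q : G.Q, (GW G).qWeight (Sum.inl q) t = G.qWeight q t) ∧
      (∀ (x : PIdx G) (hx : x.2.1 ≠ []),
        (GW G).qWeight (Sum.inr ⟨x, hx⟩) t
          = Bfun G (RTree.node (Sum.inl (pSym G x)) (pChild G x)) t) := by
    intro n
    induction n using Nat.strong_induction_on with
    | _ n ihn =>
      intro t htn
      obtain ⟨b, ts⟩ := t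
      have hsub : ∀ u ∈ ts,
          (∀ q : G.Q, (GW G).qWeight (Sum.inl q) u = G.qWeight q u) ∧
          (∀ (x : PIdx G) (hx : x.2.1 ≠ []),
            (GW G).qWeight (Sum.inr ⟨x, hx⟩) u
              = Bfun G (RTree.node (Sum.inl (pSym G x)) (pChild G x)) u) := by
        intro u hu
        refine ihn (sizeOf u) ?_ u rfl
        rw [← htn]
        have := List.sizeOf_lt_of_mem hu
        simp only [RTree.node.sizeOf_spec]
        omega
      -- The bridge between `Bfun (GW G)` and `Bfun G`.
      have bridge : ∀ x : PIdx G,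
          Bfun (GW G) ((GW G).lhs x) (RTree.node b ts)
            = Bfun G (RTree.node (Sum.inl (pSym G x)) (pChild G x)) (RTree.node b ts) := by
        intro x
        erw [GW_lhs, Bfun_node, Bfun_node, List.length_ofFn]
        by_cases hc : pSym G x = b ∧ (pChild G x).length = ts.length
        · rw [if_pos hc, if_pos hc]
          congr 1
          apply List.ext_getElem
          · erw [List.length_zipWith, List.length_zipWith, List.length_ofFn, hc.2]
          · intro j hj hj2
            erw [List.getElem_zipWith, List.getElem_zipWith, List.getElem_ofFn]
            have hjl : j < (pChild G x).length := by
              erw [List.length_zipWith, List.length_ofFn] at hj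
              omega
            have hjt : j < ts.length := by omega
            have hget : (pChild G x)[j]? = some ((pChild G x)[j]) := List.getElem?_eq_getElem hjl
            erw [Bfun_inr]
            cases hcj : (pChild G x)[j] with
            | node y cs' =>
              cases y with
              | inr q =>
                have hget2 : (pChild G x)[j]? = some (RTree.node (Sum.inr q) cs') := by
                  rw [hget, hcj]
                rw [childNT_inr G hget2, Bfun_inr]
                exact (hsub ts[j] (List.getElem_mem hjt)).1 q
              | inl b' =>
                have hget2 : (pChild G x)[j]? = some (RTree.node (Sum.inl b') cs') := by
                  rw [hget, hcj]
                have hip : IPos G x.1 (x.2.1 ++ [j]) := pChild_ipos G hget2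
                rw [childNT_inl G hget2 hip]
                have h2 := (hsub ts[j] (List.getElem_mem hjt)).2 ⟨x.1, ⟨x.2.1 ++ [j], hip⟩⟩ (by simp)
                rw [h2]
                -- identify `pSym/pChild` of the new index with `b'`, `cs'`
                have hspec2 : (G.lhs x.1).subtreeAt (x.2.1 ++ [j])
                    = some (RTree.node (Sum.inl b') cs') := by
                  rw [subtreeAt_append, pSpec G x, Option.bind_some, subtreeAt_cons, hget2,
                    Option.bind_some, subtreeAt_nil]
                have hspec' : (G.lhs x.1).subtreeAt (x.2.1 ++ [j])
                    = some (RTree.node (Sum.inl (pSym G ⟨x.1, ⟨x.2.1 ++ [j], hip⟩⟩))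
                        (pChild G ⟨x.1, ⟨x.2.1 ++ [j], hip⟩⟩)) :=
                  pSpec G ⟨x.1, ⟨x.2.1 ++ [j], hip⟩⟩
                rw [hspec2, Option.some_inj] at hspec'
                rw [← hspec']
        · rw [if_neg hc, if_neg hc]
      constructor
      · -- (A)
        intro q
        erw [topB (GW G), topB G]
        have hinj : Set.InjOn (fun p : G.P => (⟨p, ⟨[], root_ipos G p⟩⟩ : PIdx G))
            {p : G.P | G.tgt p = q ∧ COK G p (RTree.node b ts)} := by
          intro p _ p' _ h
          exact congrArg Sigma.fst h
        have hSW : {x : (GW G).P | (GW G).tgt x = Sum.inl q ∧ COK (GW G) x (RTree.node b ts)}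
            = (fun p : G.P => (⟨p, ⟨[], root_ipos G p⟩⟩ : PIdx G)) ''
              {p : G.P | G.tgt p = q ∧ COK G p (RTree.node b ts)} := by
          ext x
          simp only [Set.mem_setOf_eq, Set.mem_image]
          constructor
          · rintro ⟨h1, h2⟩
            have hnil : x.2.1 = [] := by
              by_contra hne
              rw [GW_tgt_ne G x hne] at h1
              exact Sum.inr_ne_inl h1
            rw [GW_tgt_nil G x hnil] at h1
            injection h1 with h1
            refine ⟨x.1, ⟨h1, (COK_GW_nil G x hnil _).mp h2⟩, ?_⟩
            obtain ⟨p, w, hw⟩ := x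
            simp only at hnil
            subst hnil
            rfl
          · rintro ⟨p, ⟨h1, h2⟩, rfl⟩
            exact ⟨by erw [GW_tgt_nil G _ rfl]; exact congrArg Sum.inl h1,
              (COK_GW_nil G _ rfl _).mpr h2⟩
        rw [hSW]
        refine Eq.trans (finsum_mem_image hinj) ?_
        apply finsum_congr
        intro p
        apply finsum_congr
        intro _
        show (GW G).wt ⟨p, ⟨[], root_ipos G p⟩⟩
            * Bfun (GW G) ((GW G).lhs ⟨p, ⟨[], root_ipos G p⟩⟩) (RTree.node b ts)
          = G.wt p * Bfun G (G.lhs p) (RTree.node b ts)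
        rw [GW_wt_nil G ⟨p, ⟨[], root_ipos G p⟩⟩ rfl, bridge ⟨p, ⟨[], root_ipos G p⟩⟩]
        have hspec' : (G.lhs p).subtreeAt []
            = some (RTree.node (Sum.inl (pSym G ⟨p, ⟨[], root_ipos G p⟩⟩))
                (pChild G ⟨p, ⟨[], root_ipos G p⟩⟩)) := pSpec G ⟨p, ⟨[], root_ipos G p⟩⟩
        rw [subtreeAt_nil, Option.some_inj] at hspec'
        rw [← hspec']
      · -- (II)
        intro x hx
        erw [topB (GW G)]
        have hset : {x' : (GW G).P | (GW G).tgt x' = Sum.inr ⟨x, hx⟩ ∧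
            COK (GW G) x' (RTree.node b ts)} = {x} := by
          ext x'
          simp only [Set.mem_setOf_eq, Set.mem_singleton_iff]
          constructor
          · rintro ⟨h1, -⟩
            by_cases hn : x'.2.1 = []
            · rw [GW_tgt_nil G x' hn] at h1
              exact absurd h1 (by simp)
            · rw [GW_tgt_ne G x' hn] at h1
              injection h1 with h1
              exact congrArg Subtype.val h1
          · intro he
            refine ⟨?_, ?_⟩
            · rw [he]; exact GW_tgt_ne G x hx
            · rw [he]; exact COK_GW_ne G x hx _
        rw [hset]
        refine Eq.trans finsum_mem_singleton ?_
        show (GW G).wt x * Bfun (GW G) ((GW G).lhs x) (RTree.node b ts)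
          = Bfun G (RTree.node (Sum.inl (pSym G x)) (pChild G x)) (RTree.node b ts)
        rw [GW_wt_ne G x hx, one_mul, bridge x]
  exact fun t => H (sizeOf t) t rfl

theorem finsum_sum_left {A B : Type} [Finite A] [Finite B] (f : A ⊕ B → S)
    (h : ∀ y, f (Sum.inr y) = 0) : ∑ᶠ x : A ⊕ B, f x = ∑ᶠ a : A, f (Sum.inl a) := by
  letI : Fintype A := Fintype.ofFinite A
  letI : Fintype B := Fintype.ofFinite B
  rw [finsum_eq_sum_of_fintype, finsum_eq_sum_of_fintype, Fintype.sum_sum_type]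
  simp [h]

theorem GW_equivalent (G : WTGc S Γ ar) : G.Equivalent (GW G) := by
  intro t
  haveI := G.finQ
  haveI := pidx_finite G
  rw [WTGc.weight, WTGc.weight]
  have hstep : ∑ᶠ q' : (GW G).Q, (GW G).final q' * (GW G).qWeight q' t
      = ∑ᶠ q : G.Q, (GW G).final (Sum.inl q) * (GW G).qWeight (Sum.inl q) t :=
    finsum_sum_left (A := G.Q) (B := {y : PIdx G // y.2.1 ≠ []})
      (fun q' => (GW G).final q' * (GW G).qWeight q' t)
      (fun y => by
        show (GW G).final (Sum.inr y) * (GW G).qWeight (Sum.inr y) t = 0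
        rw [show (GW G).final (Sum.inr y) = 0 from rfl, zero_mul])
  rw [hstep]
  apply finsum_congr
  intro q
  rw [show (GW G).final (Sum.inl q) = G.final q from rfl, (main G t).1 q]

end Stmt0
/-- For every WTGc over a commutative semiring `S` there exists an
equivalent WTAc (all productions normalized); if the WTGc is positive, the WTAc
can be chosen positive. -/
theorem stmt0 {S : Type} [CommSemiring S] {Γ : Type} [Finite Γ] {ar : Γ → ℕ}
    (G : WTGc S Γ ar) :
    ∃ G' : WTGc S Γ ar, G'.IsWTAc ∧ G.Equivalent G' ∧ (G.Positive → G'.Positive) := by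
  exact ⟨Stmt0.GW G, Stmt0.GW_isWTAc G, Stmt0.GW_equivalent G, Stmt0.GW_positive G⟩
end

section
/- Let S be a zero-sum free commutative semiring. For every WTGc G over S, the support supp(G) = {t ∈ T_Σ | G_t ≠ 0} is constraint-regular, i.e. it is generated by some tree grammar with constraints (a WTGc over the Boolean semiring). Moreover, if G is positive (respectively classic), then supp(G) is positive (respectively classic) constraint-regular. -/
section Stmt3Aux

open RTree

private theorem treeInd {α : Type} {M : RTree α → Prop}
    (h : ∀ a ts, (∀ t ∈ ts, M t) → M (RTree.node a ts)) : ∀ t, M t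
  | .node a ts => h a ts fun t ht => treeInd h t
termination_by t => sizeOf t
decreasing_by simp_wf; have := List.sizeOf_lt_of_mem ht; omega

private theorem map_node {α β : Type} (f : α → β) (a : α) (ts : List (RTree α)) :
    RTree.map f (RTree.node a ts) = RTree.node (f a) (ts.map (RTree.map f)) := by
  rw [RTree.map]
  simp [List.attach_map_val]

private theorem map_map {α β γ : Type} (f : β → γ) (g : α → β) (t : RTree α) :
    RTree.map f (RTree.map g t) = RTree.map (f ∘ g) t := by
  induction t using treeInd with
  | h a ts ih =>
    rw [map_node, map_node, map_node, List.map_map]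
    exact congrArg _ (List.map_congr_left fun c hc => ih c hc)

private theorem size_node {α : Type} (a : α) (ts : List (RTree α)) :
    RTree.size (RTree.node a ts) = 1 + (ts.map RTree.size).sum := by
  rw [RTree.size]
  simp [List.attach_map_val]

private theorem size_map {α β : Type} (f : α → β) (t : RTree α) :
    RTree.size (RTree.map f t) = RTree.size t := by
  induction t using treeInd with
  | h a ts ih =>
    rw [map_node, size_node, size_node, List.map_map]
    exact congrArg _ (congrArg _ (List.map_congr_left fun c hc => ih c hc))

private theorem size_pos {α : Type} (t : RTree α) : 1 ≤ RTree.size t := by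
  cases t with
  | node a ts => rw [size_node]; omega

private theorem subtreeAt_nil {α : Type} (t : RTree α) : t.subtreeAt [] = some t := by
  rw [RTree.subtreeAt]

private theorem subtreeAt_cons {α : Type} (a : α) (ts : List (RTree α)) (i : ℕ) (w : List ℕ) :
    (RTree.node a ts).subtreeAt (i :: w) = (ts[i]?).bind fun c => c.subtreeAt w := by
  rw [RTree.subtreeAt]

private theorem subtreeAt_map {α β : Type} (f : α → β) (t : RTree α) (w : List ℕ) :
    (RTree.map f t).subtreeAt w = (t.subtreeAt w).map (RTree.map f) := by
  induction w generalizing t with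
  | nil => simp [subtreeAt_nil]
  | cons i w ih =>
    cases t with
    | node a ts =>
      rw [map_node, subtreeAt_cons, subtreeAt_cons, List.getElem?_map]
      cases ts[i]? with
      | none => rfl
      | some c => simp [ih]

private theorem mapIdx_ite {α : Type} (f : α → α) :
    ∀ (ts : List α) (i : ℕ),
      (ts.mapIdx fun j c => if j = i then f c else c) =
        match ts[i]? with
        | some c => ts.set i (f c)
        | none => ts
  | [], i => by simp
  | a :: ts, 0 => by
    simp only [List.mapIdx_cons, List.getElem?_cons_zero, List.set_cons_zero, if_pos rfl]
    congr 1
    have h1 : (ts.mapIdx fun j c => if j + 1 = 0 then f c else c) = ts.mapIdx fun _ c => c := by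
      congr 1
    rw [h1]
    exact List.ext_getElem (by simp) (by simp)
  | a :: ts, (i+1) => by
    simp only [List.mapIdx_cons, List.getElem?_cons_succ, List.set_cons_succ]
    have h1 : (ts.mapIdx fun j c => if j + 1 = i + 1 then f c else c)
        = ts.mapIdx fun j c => if j = i then f c else c := by
      congr 1; funext j c; simp
    rw [h1, mapIdx_ite f ts i]
    cases ts[i]? <;> simp

private theorem replaceAt_cons {α : Type} (a : α) (ts : List (RTree α)) (i : ℕ) (w : List ℕ)
    (s : RTree α) (c : RTree α) (hc : ts[i]? = some c) :
    (RTree.node a ts).replaceAt (i :: w) s = RTree.node a (ts.set i (c.replaceAt w s)) := by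
  rw [RTree.replaceAt]
  congr 1
  have := mapIdx_ite (fun x => RTree.replaceAt x w s) ts i
  -- the function in replaceAt is `fun j c => if j = i then replaceAt c w s else c`
  rw [show (fun j c => if j = i then RTree.replaceAt c w s else c)
      = (fun j c => if j = i then (fun x => RTree.replaceAt x w s) c else c) from rfl, this, hc]

private theorem sum_set {α M : Type} [AddCommMonoid M] (h : α → M) :
    ∀ (l : List α) (i : ℕ) (c : α), l[i]? = some c →
      ∃ R, (l.map h).sum = h c + R ∧ ∀ x, ((l.set i x).map h).sum = h x + R
  | [], i, c, hc => by simp at hc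
  | a :: l, 0, c, hc => by
    simp only [List.getElem?_cons_zero, Option.some.injEq] at hc
    subst hc
    exact ⟨(l.map h).sum, by simp, fun x => by simp⟩
  | a :: l, (i+1), c, hc => by
    simp only [List.getElem?_cons_succ] at hc
    obtain ⟨R, h1, h2⟩ := sum_set h l i c hc
    refine ⟨h a + R, by simp [h1]; abel, fun x => by rw [List.set_cons_succ, List.map_cons, List.sum_cons, h2 x]; abel⟩

private theorem replaceAt_map {α β : Type} (f : α → β) :
    ∀ (w : List ℕ) (t s : RTree α),
      RTree.map f (t.replaceAt w s) = (RTree.map f t).replaceAt w (RTree.map f s)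
  | [], t, s => by rw [RTree.replaceAt, RTree.replaceAt]
  | (i :: w), RTree.node a ts, s => by
    cases hc : ts[i]? with
    | none =>
      rw [RTree.replaceAt, map_node]
      have h1 := mapIdx_ite (fun x => RTree.replaceAt x w s) ts i
      rw [show (fun j c => if j = i then RTree.replaceAt c w s else c)
        = (fun j c => if j = i then (fun x => RTree.replaceAt x w s) c else c) from rfl, h1, hc]
      rw [map_node, RTree.replaceAt]
      congr 1
      have h2 := mapIdx_ite (fun x => RTree.replaceAt x w (RTree.map f s)) (ts.map (RTree.map f)) i
      rw [show (fun j c => if j = i then RTree.replaceAt c w (RTree.map f s) else c)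
        = (fun j c => if j = i then (fun x => RTree.replaceAt x w (RTree.map f s)) c else c)
          from rfl, h2]
      simp [List.getElem?_map, hc]
    | some c =>
      rw [replaceAt_cons a ts i w s c hc, map_node, map_node,
        replaceAt_cons (f a) (ts.map (RTree.map f)) i w (RTree.map f s) (RTree.map f c)
          (by simp [List.getElem?_map, hc]),
        List.map_set, replaceAt_map f w c s]

section Mval

variable {α M : Type} [AddCommMonoid M] (g : α → M)

private def mval : RTree α → M
  | .node a ts => g a + (ts.attach.map fun c => mval c.1).sum
termination_by t => sizeOf t
decreasing_by simp_wf; have := List.sizeOf_lt_of_mem c.2; omega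

private theorem mval_node (a : α) (ts : List (RTree α)) :
    mval g (RTree.node a ts) = g a + (ts.map (mval g)).sum := by
  rw [mval]
  simp [List.attach_map_val]

private theorem mval_replace :
    ∀ (w : List ℕ) (t s : RTree α), t.subtreeAt w = some s →
      ∃ R, mval g t = mval g s + R ∧
        ∀ r, mval g (t.replaceAt w r) = mval g r + R
  | [], t, s, hs => by
    rw [subtreeAt_nil, Option.some.injEq] at hs
    subst hs
    exact ⟨0, by simp, fun r => by rw [RTree.replaceAt]; simp⟩
  | (i :: w), RTree.node a ts, s, hs => by
    rw [subtreeAt_cons] at hs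
    obtain ⟨c, hc, hcs⟩ : ∃ c, ts[i]? = some c ∧ c.subtreeAt w = some s := by
      cases h' : ts[i]? with
      | none => rw [h'] at hs; simp at hs
      | some c => rw [h'] at hs; exact ⟨c, rfl, hs⟩
    obtain ⟨R', h1, h2⟩ := mval_replace w c s hcs
    obtain ⟨RL, hl1, hl2⟩ := sum_set (mval g) ts i c hc
    refine ⟨R' + (g a + RL), ?_, fun r => ?_⟩
    · rw [mval_node, hl1, h1]; abel
    · rw [replaceAt_cons a ts i w r c hc, mval_node, hl2, h2]; abel

end Mval

private theorem finite_lists {α : Type} {s : Set α} (hs : s.Finite) (n : ℕ) :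
    {l : List α | l.length ≤ n ∧ ∀ x ∈ l, x ∈ s}.Finite := by
  haveI := hs.to_subtype
  have h1 : {l : List ↥s | l.length ≤ n}.Finite := List.finite_length_le ↥s n
  apply Set.Finite.subset (h1.image (List.map Subtype.val))
  rintro l ⟨hlen, hmem⟩
  refine ⟨l.attach.map fun x => (⟨x.1, hmem x.1 x.2⟩ : ↥s), by simpa using hlen, ?_⟩
  rw [List.map_map]
  exact List.attach_map_subtype_val l

private theorem length_le_sum_sizes {α : Type} :
    ∀ (ts : List (RTree α)), ts.length ≤ (ts.map RTree.size).sum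
  | [] => le_refl _
  | t :: ts => by
    simp only [List.length_cons, List.map_cons, List.sum_cons]
    have := size_pos t
    have := length_le_sum_sizes ts
    omega

private theorem finite_size_le {α : Type} [Finite α] (n : ℕ) :
    {t : RTree α | RTree.size t ≤ n}.Finite := by
  induction n using Nat.strong_induction_on with
  | _ n ih =>
    rcases n with _ | m
    · convert Set.finite_empty
      ext t
      simp only [Set.mem_setOf_eq, Set.mem_empty_iff_false, iff_false]
      have := size_pos t
      omega
    · have hlists : {l : List (RTree α) | l.length ≤ m ∧ ∀ x ∈ l, x ∈ {t | RTree.size t ≤ m}}.Finite :=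
        finite_lists (ih m (Nat.lt_succ_self m)) m
      apply Set.Finite.subset (((Set.finite_univ (α := α)).prod hlists).image
        fun x => RTree.node x.1 x.2)
      rintro t ht
      cases t with
      | node a ts =>
        simp only [Set.mem_setOf_eq, size_node] at ht
        refine ⟨(a, ts), ⟨trivial, ?_, ?_⟩, rfl⟩
        · show ts.length ≤ m
          have := length_le_sum_sizes ts; omega
        · show ∀ x ∈ ts, x ∈ {t | RTree.size t ≤ m}
          intro x hx
          have hle : RTree.size x ≤ (ts.map RTree.size).sum :=
            List.single_le_sum (fun b _ => Nat.zero_le b) _ (List.mem_map_of_mem hx)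
          simp only [Set.mem_setOf_eq]
          omega

private theorem finite_pos {α : Type} :
    ∀ (t : RTree α), {w : List ℕ | (t.subtreeAt w).isSome}.Finite := by
  intro t
  induction t using treeInd with
  | h a ts ih =>
    have hfin : ∀ i : Fin ts.length,
        {w : List ℕ | ((ts.get i).subtreeAt w).isSome}.Finite :=
      fun i => ih _ (List.get_mem ts i)
    apply Set.Finite.subset (Set.Finite.insert []
      (Set.finite_iUnion fun i : Fin ts.length => ((hfin i).image (List.cons i.1))))
    rintro w hw
    cases w with
    | nil => exact Set.mem_insert _ _
    | cons i w =>
      simp only [Set.mem_setOf_eq, subtreeAt_cons] at hw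
      obtain ⟨c, hc, hcw⟩ : ∃ c, ts[i]? = some c ∧ (c.subtreeAt w).isSome := by
        cases h' : ts[i]? with
        | none => rw [h'] at hw; simp at hw
        | some c => rw [h'] at hw; exact ⟨c, rfl, hw⟩
      have hi : i < ts.length := by
        by_contra h
        rw [List.getElem?_eq_none (by omega)] at hc
        simp at hc
      apply Set.mem_insert_of_mem
      refine Set.mem_iUnion.2 ⟨⟨i, hi⟩, ⟨w, ?_, rfl⟩⟩
      have : ts.get ⟨i, hi⟩ = c := by
        rw [List.getElem?_eq_getElem hi] at hc
        simpa [List.get_eq_getElem] using hc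
      simp only [Set.mem_setOf_eq, this]
      exact hcw

private theorem WF_map_inv {α β : Type} (f : α → β) (A : β → ℕ) :
    ∀ (t : RTree α), (RTree.map f t).WF A → t.WF (fun b => A (f b)) := by
  intro t
  induction t using treeInd with
  | h a ts ih =>
    intro hwf
    rw [map_node] at hwf
    cases hwf with
    | node hlen hall =>
      refine RTree.WF.node (by simpa using hlen) ?_
      intro c hc
      exact ih c hc (hall _ (List.mem_map_of_mem hc))

section Zsf

variable {S : Type} [CommSemiring S]

private theorem finset_sum_eq_zero_iff (hzsf : ∀ s s' : S, s + s' = 0 → s = 0 ∧ s' = 0)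
    {α : Type} (u : Finset α) (f : α → S) :
    (∑ x ∈ u, f x) = 0 ↔ ∀ x ∈ u, f x = 0 := by
  induction u using Finset.cons_induction with
  | empty => simp
  | cons a u ha ih =>
    rw [Finset.sum_cons]
    constructor
    · intro h
      obtain ⟨h1, h2⟩ := hzsf _ _ h
      intro x hx
      rcases Finset.mem_cons.1 hx with rfl | hx
      · exact h1
      · exact (ih.1 h2) x hx
    · intro h
      rw [h a (Finset.mem_cons_self a u), zero_add]
      exact ih.2 fun x hx => h x (Finset.mem_cons_of_mem hx)

private theorem finsum_mem_ne_zero_iff (hzsf : ∀ s s' : S, s + s' = 0 → s = 0 ∧ s' = 0)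
    {α : Type} {s : Set α} (hs : s.Finite) (f : α → S) :
    (∑ᶠ x ∈ s, f x) ≠ 0 ↔ ∃ x ∈ s, f x ≠ 0 := by
  have h1 : (∑ᶠ x ∈ s, f x) = ∑ x ∈ hs.toFinset, f x := by
    rw [← finsum_mem_coe_finset, Set.Finite.coe_toFinset]
  rw [h1]
  rw [ne_eq, finset_sum_eq_zero_iff hzsf]
  push_neg
  constructor
  · rintro ⟨x, hx, hfx⟩; exact ⟨x, hs.mem_toFinset.1 hx, hfx⟩
  · rintro ⟨x, hx, hfx⟩; exact ⟨x, hs.mem_toFinset.2 hx, hfx⟩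

private theorem finsum_ne_zero_iff (hzsf : ∀ s s' : S, s + s' = 0 → s = 0 ∧ s' = 0)
    {α : Type} [Finite α] (f : α → S) :
    (∑ᶠ x, f x) ≠ 0 ↔ ∃ x, f x ≠ 0 := by
  rw [← finsum_mem_univ]
  rw [finsum_mem_ne_zero_iff hzsf Set.finite_univ]
  simp

end Zsf

private theorem b2_zsf : ∀ s s' : B2, s + s' = 0 → s = 0 ∧ s' = 0 := by
  rintro (_|_) (_|_) h
  · exact ⟨rfl, rfl⟩
  all_goals exact B2.noConfusion h

section Dickson

variable {P : Type} [Finite P]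

private def capv (B : ℕ) (v : P → ℕ) : P → ℕ := fun p => min (v p) B

private theorem exists_cap (Z : (P → ℕ) → Prop)
    (hmono : ∀ v w : P → ℕ, (∀ p, v p ≤ w p) → Z v → Z w) :
    ∃ B, ∀ v, Z v → Z (capv B v) := by
  by_contra h
  push_neg at h
  choose v hv hv' using h
  have hpwo : (Set.univ : Set (∀ _ : P, ℕ)).IsPWO :=
    Set.isPWO_of_wellQuasiOrderedLE _
  obtain ⟨g, hg⟩ := hpwo.exists_monotone_subseq (f := v) fun _ => Set.mem_univ _
  obtain ⟨B0, hB0⟩ : ∃ B0, ∀ p, v (g 0) p ≤ B0 := by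
    obtain ⟨B0, hB0⟩ := (Set.finite_range (v (g 0))).bddAbove
    exact ⟨B0, fun p => hB0 (Set.mem_range_self p)⟩
  apply hv' (g B0)
  apply hmono (v (g 0)) _ _ (hv (g 0))
  intro p
  have h1 : v (g 0) p ≤ v (g B0) p := by
    have := hg (Nat.zero_le B0)
    exact this p
  have h2 : B0 ≤ g B0 := (g.strictMono).le_apply
  simp only [capv, le_min_iff]
  exact ⟨h1, le_trans (hB0 p) h2⟩

end Dickson

section Vmonoid

private def V (P : Type) (B : ℕ) : Type := {v : P → ℕ // ∀ p, v p ≤ B}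

variable {P : Type} {B : ℕ}

private instance : Zero (V P B) := ⟨⟨fun _ => 0, fun _ => Nat.zero_le _⟩⟩
private instance : Add (V P B) :=
  ⟨fun x y => ⟨fun p => min (x.1 p + y.1 p) B, fun p => min_le_right _ _⟩⟩

private instance : AddCommMonoid (V P B) where
  add_assoc x y z := by
    apply Subtype.ext; funext p
    show min (min (x.1 p + y.1 p) B + z.1 p) B = min (x.1 p + min (y.1 p + z.1 p) B) B
    omega
  zero_add x := by
    apply Subtype.ext; funext p
    show min (0 + x.1 p) B = x.1 p
    have := x.2 p; omega
  add_zero x := by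
    apply Subtype.ext; funext p
    show min (x.1 p + 0) B = x.1 p
    have := x.2 p; omega
  add_comm x y := by
    apply Subtype.ext; funext p
    show min (x.1 p + y.1 p) B = min (y.1 p + x.1 p) B
    omega
  nsmul := nsmulRec
  nsmul_zero := fun x => rfl
  nsmul_succ := fun n x => rfl

private instance [Finite P] : Finite (V P B) := by
  apply Finite.of_injective (fun v : V P B => (fun p => (⟨v.1 p, Nat.lt_succ_of_le (v.2 p)⟩ : Fin (B+1))))
  intro v w h
  apply Subtype.ext; funext p
  have := congrFun h p
  simpa [Fin.ext_iff] using this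

private def capV (v : P → ℕ) : V P B := ⟨capv B v, fun p => min_le_right _ _⟩

private theorem capV_add (x y : P → ℕ) :
    (capV (fun p => x p + y p) : V P B) = capV x + capV y := by
  apply Subtype.ext; funext p
  show min (x p + y p) B = min (min (x p) B + min (y p) B) B
  omega

private theorem capV_zero : (capV (fun _ => 0) : V P B) = 0 := by
  apply Subtype.ext; funext p
  show min 0 B = 0
  omega

end Vmonoid

section Grammar

open WTGc

variable {S : Type} [CommSemiring S] {Γ : Type} {ar : Γ → ℕ} (G : WTGc S Γ ar)

private theorem lhs_root_inl (p : G.P) :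
    ∃ (a : Γ) (ts : List (RTree (Γ ⊕ G.Q))), G.lhs p = RTree.node (Sum.inl a) ts := by
  cases h : G.lhs p with
  | node x l =>
    cases x with
    | inl a => exact ⟨a, l, rfl⟩
    | inr q =>
      exfalso
      have hwf := G.lhs_wf p
      rw [h] at hwf
      cases hwf with
      | node hlen _ =>
        simp at hlen
        exact G.lhs_ne p q (h.trans (by rw [hlen]))

private def nInl {Q : Type} : RTree (Γ ⊕ Q) → ℕ :=
  mval (Sum.elim (fun _ => 1) (fun _ => 0))

private theorem step_nInl_lt {t : RTree Γ} {ξ ζ : RTree (Γ ⊕ G.Q)} {p : G.P} {w : List ℕ}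
    (h : G.Step t ξ p w ζ) : nInl ζ < nInl ξ := by
  obtain ⟨hsub, hrepl, -⟩ := h
  obtain ⟨R, h1, h2⟩ := mval_replace (Sum.elim (fun _ => 1) (fun _ => 0)) w ξ _ hsub
  have h3 := h2 (RTree.node (Sum.inr (G.tgt p)) [])
  obtain ⟨a, ts, hts⟩ := lhs_root_inl G p
  have h0 : mval (Sum.elim (fun _ => 1) (fun _ => 0))
      (RTree.node (Sum.inr (G.tgt p)) ([] : List (RTree (Γ ⊕ G.Q)))) = 0 := by
    rw [mval_node]; simp
  have h4 : 1 ≤ mval (Sum.elim (fun _ => 1) (fun _ => 0)) (G.lhs p) := by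
    rw [hts, mval_node]; simp
  rw [hrepl]
  unfold nInl
  rw [h3, h0, h1]
  omega

private theorem derives_length {t : RTree Γ} :
    ∀ {ξ η : RTree (Γ ⊕ G.Q)} {d : List (G.P × List ℕ)},
      G.Derives t ξ d η → d.length ≤ nInl ξ := by
  intro ξ η d h
  induction h with
  | refl => simp
  | step hs hd ih =>
    have := step_nInl_lt G hs
    simp only [List.length_cons]
    omega

private theorem derives_pos {t : RTree Γ} {ξ η : RTree (Γ ⊕ G.Q)} {d : List (G.P × List ℕ)}
    (h : G.Derives t ξ d η) : ∀ x ∈ d, (t.subtreeAt x.2).isSome := by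
  induction h with
  | refl => simp
  | step hs hd ih =>
    intro x hx
    rcases List.mem_cons.1 hx with rfl | hx
    · obtain ⟨-, -, s, hs', -⟩ := hs
      simp [hs']
    · exact ih x hx

private theorem finite_D (q : G.Q) (t : RTree Γ) : (G.D q t).Finite := by
  haveI := G.finP
  apply Set.Finite.subset (finite_lists
    ((Set.finite_univ (α := G.P)).prod (finite_pos t)) (nInl (t.map Sum.inl)))
  rintro d ⟨hder, -⟩
  exact ⟨derives_length G hder, fun x hx => ⟨trivial, derives_pos G hder x hx⟩⟩

private theorem weight_ne_zero_iff (hzsf : ∀ s s' : S, s + s' = 0 → s = 0 ∧ s' = 0)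
    (t : RTree Γ) :
    G.weight t ≠ 0 ↔ ∃ q, ∃ d ∈ G.D q t, G.final q * G.wtD d ≠ 0 := by
  haveI := G.finQ
  rw [WTGc.weight, finsum_ne_zero_iff hzsf]
  apply exists_congr
  intro q
  have hD := finite_D G q t
  have h1 : G.qWeight q t = ∑ d ∈ hD.toFinset, G.wtD d := by
    rw [WTGc.qWeight, ← finsum_mem_coe_finset, Set.Finite.coe_toFinset]
  rw [h1, Finset.mul_sum]
  rw [ne_eq, finset_sum_eq_zero_iff hzsf]
  push_neg
  constructor
  · rintro ⟨d, hd, hne⟩; exact ⟨d, hD.mem_toFinset.1 hd, hne⟩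
  · rintro ⟨d, hd, hne⟩; exact ⟨d, hD.mem_toFinset.2 hd, hne⟩

end Grammar

section ProdW

variable {S : Type} [CommSemiring S] {P : Type} [Finite P]

open Classical in
private noncomputable def unitv (p : P) : P → ℕ := fun p' => if p' = p then 1 else 0

private noncomputable def countVec : List P → (P → ℕ)
  | [] => fun _ => 0
  | p :: l => fun p' => unitv p p' + countVec l p'

private noncomputable def prodW (wt : P → S) (v : P → ℕ) : S := ∏ᶠ p, wt p ^ v p

private theorem mulSupport_finite (f : P → S) : Function.HasFiniteMulSupport f :=
  Set.toFinite _

private theorem prod_count (wt : P → S) :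
    ∀ l : List P, (l.map wt).prod = prodW wt (countVec l)
  | [] => by
    simp [prodW, countVec]
  | a :: l => by
    classical
    rw [List.map_cons, List.prod_cons, prod_count wt l]
    rw [prodW, prodW]
    have h1 : ∀ p, wt p ^ (countVec (a :: l) p) = wt p ^ unitv a p * wt p ^ countVec l p := by
      intro p
      rw [show countVec (a :: l) p = unitv a p + countVec l p from rfl, pow_add]
    rw [finprod_congr h1, finprod_mul_distrib (mulSupport_finite _) (mulSupport_finite _)]
    congr 1
    have h2 : ∀ p, p ≠ a → wt p ^ unitv a p = 1 := by
      intro p hp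
      rw [show unitv a p = 0 from by simp [unitv, hp], pow_zero]
    rw [finprod_eq_single _ a h2]
    simp [unitv]

private theorem prodW_mono_zero (wt : P → S) (c : S) (v w : P → ℕ) (hle : ∀ p, v p ≤ w p)
    (h : c * prodW wt v = 0) : c * prodW wt w = 0 := by
  have h1 : ∀ p, wt p ^ w p = wt p ^ v p * wt p ^ (w p - v p) := by
    intro p
    rw [← pow_add]
    congr 1
    have := hle p
    omega
  rw [prodW, finprod_congr h1, finprod_mul_distrib (mulSupport_finite _) (mulSupport_finite _),
    ← mul_assoc]
  rw [prodW] at h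
  rw [h, zero_mul]

end ProdW

section Construction

open WTGc

variable {S : Type} [CommSemiring S] {Γ : Type} [Finite Γ] {ar : Γ → ℕ}
variable (G : WTGc S Γ ar) (B : ℕ)

private def projf : (Γ ⊕ (G.Q × V G.P B)) → (Γ ⊕ G.Q) := Sum.map id Prod.fst

private def proj : RTree (Γ ⊕ (G.Q × V G.P B)) → RTree (Γ ⊕ G.Q) :=
  RTree.map (projf G B)

private def lab : (Γ ⊕ (G.Q × V G.P B)) → V G.P B := Sum.elim (fun _ => 0) Prod.snd

private def tot : RTree (Γ ⊕ (G.Q × V G.P B)) → V G.P B := mval (lab G B)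

private noncomputable def eV (p : G.P) : V G.P B := capV (unitv p)

private noncomputable def cV (l : List G.P) : V G.P B := (l.map (eV G B)).sum

private theorem proj_inl (t : RTree Γ) : proj G B (t.map Sum.inl) = t.map Sum.inl := by
  rw [proj, map_map]
  have h : projf G B ∘ Sum.inl = (Sum.inl : Γ → Γ ⊕ G.Q) := funext fun a => rfl
  rw [h]

private theorem tot_inl (t : RTree Γ) : tot G B (t.map Sum.inl) = 0 := by
  induction t using treeInd with
  | h a ts ih =>
    rw [map_node, tot, mval_node]
    have h1 : lab G B (Sum.inl a) = 0 := rfl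
    rw [h1, zero_add]
    apply List.sum_eq_zero
    intro x hx
    rw [List.map_map] at hx
    obtain ⟨c, hc, rfl⟩ := List.mem_map.1 hx
    exact ih c hc

private theorem proj_eq_leaf (s : RTree (Γ ⊕ (G.Q × V G.P B))) (q : G.Q)
    (h : proj G B s = RTree.node (Sum.inr q) []) :
    ∃ v, s = RTree.node (Sum.inr (q, v)) [] := by
  cases s with
  | node a ts =>
    rw [proj, map_node] at h
    have h1 : projf G B a = Sum.inr q ∧ ts.map (RTree.map (projf G B)) = [] := by
      constructor
      · exact (RTree.node.inj h).1
      · exact (RTree.node.inj h).2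
    obtain ⟨ha, hts⟩ := h1
    have hts' : ts = [] := List.map_eq_nil_iff.1 hts
    cases a with
    | inl γ => exact absurd ha (by simp [projf])
    | inr qv =>
      refine ⟨qv.2, ?_⟩
      have : qv.1 = q := by simpa [projf] using ha
      rw [hts', ← this]

private theorem tot_leaf (q : G.Q) (v : V G.P B) :
    tot G B (RTree.node (Sum.inr (q, v)) []) = v := by
  rw [tot, mval_node]
  simp [lab]

private theorem cV_eq (l : List G.P) : cV G B l = capV (countVec l) := by
  induction l with
  | nil => simp [cV, countVec, capV_zero]
  | cons a l ih =>
    rw [show countVec (a :: l) = fun p' => unitv a p' + countVec l p' from rfl, capV_add]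
    rw [cV, List.map_cons, List.sum_cons]
    rw [show (l.map (eV G B)).sum = cV G B l from rfl, ih]
    rfl

private def P0 : Type :=
  {x : G.P × RTree (Γ ⊕ (G.Q × V G.P B)) // proj G B x.2 = G.lhs x.1}

private theorem finite_P0 : Finite (P0 G B) := by
  haveI := G.finP
  haveI := G.finQ
  obtain ⟨N, hN⟩ : ∃ N, ∀ p : G.P, RTree.size (G.lhs p) ≤ N := by
    obtain ⟨N, hN⟩ := (Set.finite_range fun p => RTree.size (G.lhs p)).bddAbove
    exact ⟨N, fun p => hN (Set.mem_range_self p)⟩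
  have hsub : {x : G.P × RTree (Γ ⊕ (G.Q × V G.P B)) | proj G B x.2 = G.lhs x.1} ⊆
      (Set.univ : Set G.P) ×ˢ {s | RTree.size s ≤ N} := by
    rintro ⟨p, s⟩ hx
    refine ⟨trivial, ?_⟩
    show RTree.size s ≤ N
    have h1 : RTree.size (proj G B s) = RTree.size s := size_map _ _
    rw [show proj G B s = G.lhs p from hx] at h1
    rw [← h1]
    exact hN p
  exact (Set.Finite.subset ((Set.finite_univ).prod (finite_size_le N)) hsub).to_subtype

open scoped Classical in
@[reducible]
private noncomputable def G0 : WTGc B2 Γ ar where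
  Q := G.Q × V G.P B
  P := P0 G B
  finQ := by haveI := G.finQ; haveI := G.finP; infer_instance
  finP := finite_P0 G B
  final := fun qv => if G.final qv.1 * prodW G.wt qv.2.1 = 0 then 0 else 1
  lhs := fun x => x.1.2
  tgt := fun x => (G.tgt x.1.1, eV G B x.1.1 + tot G B x.1.2)
  eqc := fun x => G.eqc x.1.1
  nec := fun x => G.nec x.1.1
  wt := fun _ => 1
  lhs_wf := fun x => by
    have h := G.lhs_wf x.1.1
    rw [← x.2] at h
    have h2 := WF_map_inv (projf G B) (Sum.elim ar fun _ => 0) _ h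
    have h3 : (fun b => Sum.elim ar (fun _ => 0) (projf G B b)) =
        (Sum.elim ar fun _ => 0 : (Γ ⊕ (G.Q × V G.P B)) → ℕ) := by
      funext b; rcases b with a | qv <;> rfl
    rw [h3] at h2
    exact h2
  lhs_ne := fun x q h => by
    have h2 := x.2
    have h' : x.1.2 = RTree.node (Sum.inr q) [] := h
    have h3 : proj G B (RTree.node (Sum.inr q) []) = RTree.node (Sum.inr q.1) [] := by
      show RTree.map (projf G B) _ = _
      rw [map_node]
      rfl
    rw [h', h3] at h2
    exact G.lhs_ne x.1.1 q.1 h2.symm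

private theorem wtD_G0 (d₀ : List ((G0 G B).P × List ℕ)) : (G0 G B).wtD d₀ = 1 :=
  List.prod_eq_one (by intro x hx; obtain ⟨y, -, rfl⟩ := List.mem_map.1 hx; rfl)

private theorem step_fwd {t : RTree Γ} {ξ ζ : RTree (Γ ⊕ G.Q)} {p : G.P} {w : List ℕ}
    (h : G.Step t ξ p w ζ) (ξ₀ : RTree (Γ ⊕ (G.Q × V G.P B))) (hproj : proj G B ξ₀ = ξ) :
    ∃ (x : (G0 G B).P) (ζ₀ : RTree (Γ ⊕ (G.Q × V G.P B))),
      x.1.1 = p ∧ (G0 G B).Step t ξ₀ x w ζ₀ ∧ proj G B ζ₀ = ζ ∧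
      tot G B ζ₀ = eV G B p + tot G B ξ₀ := by
  obtain ⟨hsub, hrepl, s, hts, hE, hI⟩ := h
  rw [← hproj, proj, subtreeAt_map] at hsub
  obtain ⟨s₀, hs₀, hps₀⟩ := Option.map_eq_some_iff.1 hsub
  refine ⟨⟨(p, s₀), hps₀⟩,
    ξ₀.replaceAt w (RTree.node (Sum.inr ((G0 G B).tgt ⟨(p, s₀), hps₀⟩)) []),
    rfl, ⟨hs₀, rfl, s, hts, hE, hI⟩, ?_, ?_⟩
  · show RTree.map (projf G B) _ = ζ
    rw [replaceAt_map, map_node]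
    rw [show RTree.map (projf G B) ξ₀ = proj G B ξ₀ from rfl, hproj]
    rw [hrepl]
    rfl
  · obtain ⟨R, h1, h2⟩ := mval_replace (lab G B) w ξ₀ s₀ hs₀
    have h3 := h2 (RTree.node (Sum.inr ((G0 G B).tgt ⟨(p, s₀), hps₀⟩)) [])
    show mval (lab G B) _ = eV G B p + mval (lab G B) ξ₀
    rw [h3, h1, mval_node]
    show lab G B (Sum.inr (G.tgt p, eV G B p + tot G B s₀)) + _ + R = _
    rw [show lab G B (Sum.inr (G.tgt p, eV G B p + tot G B s₀))
      = eV G B p + tot G B s₀ from rfl]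
    rw [show tot G B s₀ = mval (lab G B) s₀ from rfl]
    simp only [List.map_nil, List.sum_nil, add_zero]
    abel

private theorem step_bwd {t : RTree Γ} {ξ₀ ζ₀ : RTree (Γ ⊕ (G.Q × V G.P B))}
    {x : (G0 G B).P} {w : List ℕ} (h : (G0 G B).Step t ξ₀ x w ζ₀) :
    G.Step t (proj G B ξ₀) x.1.1 w (proj G B ζ₀) ∧
    tot G B ζ₀ = eV G B x.1.1 + tot G B ξ₀ := by
  obtain ⟨hsub, hrepl, s, hts, hE, hI⟩ := h
  have hsub' : ξ₀.subtreeAt w = some x.1.2 := hsub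
  constructor
  · refine ⟨?_, ?_, s, hts, hE, hI⟩
    · show (RTree.map (projf G B) ξ₀).subtreeAt w = some (G.lhs x.1.1)
      rw [subtreeAt_map, hsub', Option.map_some]
      rw [show RTree.map (projf G B) x.1.2 = proj G B x.1.2 from rfl, x.2]
    · rw [hrepl]
      show RTree.map (projf G B) _ = _
      rw [replaceAt_map, map_node]
      rfl
  · rw [hrepl]
    obtain ⟨R, h1, h2⟩ := mval_replace (lab G B) w ξ₀ _ hsub'
    have h3 := h2 (RTree.node (Sum.inr ((G0 G B).tgt x)) [])
    show mval (lab G B) _ = eV G B x.1.1 + mval (lab G B) ξ₀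
    rw [h3, h1, mval_node]
    rw [show lab G B (Sum.inr ((G0 G B).tgt x))
      = eV G B x.1.1 + tot G B x.1.2 from rfl]
    rw [show tot G B x.1.2 = mval (lab G B) x.1.2 from rfl]
    simp only [List.map_nil, List.sum_nil, add_zero]
    abel

private theorem derives_fwd {t : RTree Γ} {ξ η : RTree (Γ ⊕ G.Q)} {d : List (G.P × List ℕ)}
    (h : G.Derives t ξ d η) :
    ∀ ξ₀, proj G B ξ₀ = ξ →
      ∃ (d₀ : List ((G0 G B).P × List ℕ)) (η₀ : RTree (Γ ⊕ (G.Q × V G.P B))),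
        (G0 G B).Derives t ξ₀ d₀ η₀ ∧ proj G B η₀ = η ∧
        d₀.map Prod.snd = d.map Prod.snd ∧
        tot G B η₀ = cV G B (d.map Prod.fst) + tot G B ξ₀ := by
  induction h with
  | refl ξ =>
    intro ξ₀ h0
    exact ⟨[], ξ₀, Derives.refl _, h0, rfl, by simp [cV]⟩
  | @step ξ ζ η p w d hs hd ih =>
    intro ξ₀ h0
    obtain ⟨x, ζ₀, hx, hstep, hpz, htot⟩ := step_fwd G B hs ξ₀ h0
    obtain ⟨d₀, η₀, hder, hpe, hsnd, htot2⟩ := ih ζ₀ hpz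
    refine ⟨(x, w) :: d₀, η₀, Derives.step hstep hder, hpe, by simp [hsnd], ?_⟩
    rw [htot2, htot]
    simp only [List.map_cons, cV, List.sum_cons]
    abel

private theorem derives_bwd {t : RTree Γ} {ξ₀ η₀ : RTree (Γ ⊕ (G0 G B).Q)}
    {d₀ : List ((G0 G B).P × List ℕ)} (h : (G0 G B).Derives t ξ₀ d₀ η₀) :
    G.Derives t (proj G B ξ₀) (d₀.map fun y => (y.1.1.1, y.2)) (proj G B η₀) ∧
    tot G B η₀ = cV G B (d₀.map fun y => y.1.1.1) + tot G B ξ₀ := by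
  induction h with
  | refl ξ => exact ⟨Derives.refl _, by simp [cV]⟩
  | @step ξ₀' ζ₀ η₀' x w d₀' hs hd ih =>
    obtain ⟨hstep, htot⟩ := step_bwd G B hs
    refine ⟨Derives.step hstep ih.1, ?_⟩
    rw [ih.2, htot]
    simp only [List.map_cons, cV, List.sum_cons]
    abel

end Construction

open scoped Classical in
private theorem final_G0 {S : Type} [CommSemiring S] {Γ : Type} [Finite Γ] {ar : Γ → ℕ}
    (G : WTGc S Γ ar) (B : ℕ) (qv : (G0 G B).Q) :
    (G0 G B).final qv = (if G.final qv.1 * prodW G.wt qv.2.1 = 0 then (0:B2) else 1) := rfl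

end Stmt3Aux

/-- over a zero-sum free commutative semiring, the support of any
WTGc is constraint-regular, i.e. generated by a WTGc over the Boolean
semiring; positivity and the classic property are preserved. -/
theorem stmt3 {S : Type} [CommSemiring S] {Γ : Type} [Finite Γ] {ar : Γ → ℕ}
    (hzsf : ∀ s s' : S, s + s' = 0 → s = 0 ∧ s' = 0)
    (G : WTGc S Γ ar) :
    ∃ G₀ : WTGc B2 Γ ar, (∀ t : RTree Γ, G₀.weight t ≠ 0 ↔ t ∈ G.supp) ∧
      (G.Positive → G₀.Positive) ∧ (G.Classic → G₀.Classic) := by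
  classical
  haveI := G.finP
  haveI := G.finQ
  obtain ⟨B, hB⟩ : ∃ B : ℕ, ∀ (q : G.Q) (v : G.P → ℕ),
      G.final q * prodW G.wt v = 0 → G.final q * prodW G.wt (capv B v) = 0 := by
    have h1 : ∀ q : G.Q, ∃ Bq : ℕ, ∀ v, G.final q * prodW G.wt v = 0 →
        G.final q * prodW G.wt (capv Bq v) = 0 :=
      fun q => exists_cap _ (fun v w hle => prodW_mono_zero G.wt (G.final q) v w hle)
    choose f hf using h1
    obtain ⟨B, hBb⟩ := (Set.finite_range f).bddAbove
    refine ⟨B, fun q v hz => ?_⟩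
    refine prodW_mono_zero G.wt (G.final q) (capv (f q) v) (capv B v) ?_ (hf q v hz)
    intro p
    have : f q ≤ B := hBb (Set.mem_range_self q)
    simp only [capv]
    omega
  refine ⟨G0 G B, fun t => ?_, fun hP x => hP x.1.1, fun hC x c hc => ?_⟩
  · rw [weight_ne_zero_iff (G0 G B) b2_zsf t]
    show _ ↔ G.weight t ≠ 0
    rw [weight_ne_zero_iff G hzsf t]
    constructor
    · rintro ⟨⟨q, v⟩, d₀, ⟨hder, hlm⟩, hne⟩
      obtain ⟨hderG, htot⟩ := derives_bwd G B hder
      rw [proj_inl] at hderG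
      have hpe : proj G B (RTree.node (Sum.inr (q, v)) []) = RTree.node (Sum.inr q) [] := by
        show RTree.map (projf G B) _ = _
        rw [map_node]
        rfl
      rw [hpe] at hderG
      refine ⟨q, d₀.map fun y => (y.1.1.1, y.2), ⟨hderG, ?_⟩, ?_⟩
      · show List.Chain' PosLt _
        rw [List.map_map]
        exact hlm
      · rw [tot_leaf, tot_inl, add_zero, cV_eq] at htot
        intro hzero
        have hw : G.wtD (d₀.map fun y => (y.1.1.1, y.2))
            = prodW G.wt (countVec (d₀.map fun y => y.1.1.1)) := by
          rw [WTGc.wtD, List.map_map,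
            show ((fun (x : G.P × List ℕ) => G.wt x.1) ∘ fun y : (G0 G B).P × List ℕ =>
              (y.1.1.1, y.2)) = (G.wt ∘ fun y : (G0 G B).P × List ℕ => y.1.1.1) from rfl,
            ← List.map_map]
          exact prod_count G.wt _
        rw [hw] at hzero
        have hz3 := hB q _ hzero
        have hvv : v.1 = capv B (countVec (d₀.map fun y => y.1.1.1)) := by rw [htot]; rfl
        rw [← hvv] at hz3
        apply hne
        rw [wtD_G0, mul_one, final_G0, if_pos hz3]
    · rintro ⟨q, d, ⟨hder, hlm⟩, hne⟩
      obtain ⟨d₀, η₀, hder₀, hpe, hsnd, htot⟩ :=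
        derives_fwd G B hder (t.map Sum.inl) (proj_inl G B t)
      obtain ⟨v, rfl⟩ := proj_eq_leaf G B η₀ q hpe
      refine ⟨(q, v), d₀, ⟨hder₀, ?_⟩, ?_⟩
      · show List.Chain' PosLt _
        rw [hsnd]
        exact hlm
      · rw [tot_leaf, tot_inl, add_zero, cV_eq] at htot
        have hvv : v.1 = capv B (countVec (d.map Prod.fst)) := by rw [htot]; rfl
        have hnz : ¬ (G.final q * prodW G.wt v.1 = 0) := by
          intro hzz
          apply hne
          rw [hvv] at hzz
          have h5 := prodW_mono_zero G.wt (G.final q) _ _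
            (fun p => min_le_left _ _) hzz
          rw [WTGc.wtD,
            show (d.map fun x => G.wt x.1) = (d.map Prod.fst).map G.wt from by
              rw [List.map_map]; rfl,
            prod_count G.wt]
          exact h5
        rw [wtD_G0, mul_one, final_G0, if_neg hnz]
        exact fun hh => B2.noConfusion hh
  · have hc' : c ∈ G.eqc x.1.1 ∪ G.nec x.1.1 := hc
    obtain ⟨h1, h2⟩ := hC x.1.1 c hc'
    have lift : ∀ w : List ℕ, WTGc.IsNTpos (G.lhs x.1.1) w →
        WTGc.IsNTpos ((G0 G B).lhs x) w := by
      rintro w ⟨q, hq⟩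
      have hq' : (proj G B x.1.2).subtreeAt w = some (RTree.node (Sum.inr q) []) := by
        rw [x.2]
        exact hq
      rw [show proj G B x.1.2 = RTree.map (projf G B) x.1.2 from rfl, subtreeAt_map] at hq'
      obtain ⟨s₀, hs₀, hps₀⟩ := Option.map_eq_some_iff.1 hq'
      obtain ⟨v, rfl⟩ := proj_eq_leaf G B s₀ q hps₀
      exact ⟨(q, v), hs₀⟩
    exact ⟨lift c.1 h1, lift c.2 h2⟩
end

section
/- Every WTAc over a commutative semiring S can be transformed into an equivalent constraint-determined WTAc, i.e. one in which no two productions differ only in their sets of equality and inequality constraints; the transformation preserves the properties positive and unambiguous. -/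
namespace Stmt6

open RTree

/-- Custom induction principle for `RTree`. -/
theorem RTree.ind {α : Type} {motive : RTree α → Prop}
    (h : ∀ a ts, (∀ c ∈ ts, motive c) → motive (RTree.node a ts)) : ∀ t, motive t
  | .node a ts => h a ts (fun c hc => RTree.ind h c)
termination_by t => sizeOf t
decreasing_by
  simp_wf
  have := List.sizeOf_lt_of_mem hc
  omega

variable {α β : Type}

theorem map_node (g : α → β) (a : α) (ts : List (RTree α)) :
    RTree.map g (.node a ts) = .node (g a) (ts.map (RTree.map g)) := by
  rw [RTree.map]
  simp [List.attach_map_val]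

theorem map_subtreeAt (g : α → β) (t : RTree α) (w : List ℕ) :
    (t.map g).subtreeAt w = (t.subtreeAt w).map (RTree.map g) := by
  induction w generalizing t with
  | nil => simp [RTree.subtreeAt]
  | cons i w ih =>
    obtain ⟨a, ts⟩ := t
    rw [map_node]
    rw [RTree.subtreeAt, RTree.subtreeAt]
    rcases h : ts[i]? with _ | c
    · simp [h]
    · simp [h, ih]

theorem map_replaceAt (g : α → β) (t : RTree α) (w : List ℕ) (s : RTree α) :
    (t.replaceAt w s).map g = (t.map g).replaceAt w (s.map g) := by
  induction w generalizing t with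
  | nil => simp [RTree.replaceAt]
  | cons i w ih =>
    obtain ⟨a, ts⟩ := t
    rw [RTree.replaceAt, map_node, map_node, RTree.replaceAt]
    congr 1
    apply List.ext_getElem
    · simp
    intro j h1 h2
    simp only [List.getElem_map, List.getElem_mapIdx]
    split
    · exact ih _
    · rfl

theorem map_map {γ : Type} (g : β → γ) (f : α → β) (t : RTree α) :
    (t.map f).map g = t.map (g ∘ f) := by
  induction t using RTree.ind with
  | h a ts IH =>
    rw [map_node, map_node, map_node, List.map_map]
    congr 1
    exact List.map_congr_left fun c hc => IH c hc

theorem map_eq_node {g : α → β} {t : RTree α} {b : β} {us : List (RTree β)}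
    (h : t.map g = .node b us) :
    ∃ a ts, t = RTree.node a ts ∧ g a = b ∧ ts.map (RTree.map g) = us := by
  obtain ⟨a, ts⟩ := t
  rw [map_node] at h
  exact ⟨a, ts, rfl, by injection h, by injection h⟩

end Stmt6
namespace Stmt6

theorem posLt_irrefl : ∀ v : List ℕ, ¬ PosLt v v := by
  intro v hv
  induction v with
  | nil => cases hv
  | cons i v ih =>
    cases hv with
    | head _ _ h => omega
    | tail h => exact ih h

theorem posLt_trans : ∀ {u v w : List ℕ}, PosLt u v → PosLt v w → PosLt u w := by
  intro u v w h1 h2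
  induction h1 generalizing w with
  | ne_nil i w1 => cases h2
  | head v1 w1 hij =>
    cases h2 with
    | ne_nil => exact .ne_nil _ _
    | head _ _ h => exact .head _ _ (by omega)
    | tail h => exact .head _ _ (by omega)
  | tail h ih =>
    cases h2 with
    | ne_nil => exact .ne_nil _ _
    | head _ _ h' => exact .head _ _ h'
    | tail h' => exact .tail (ih h')

theorem pos_finite {α : Type} (t : RTree α) :
    {w : List ℕ | (t.subtreeAt w).isSome}.Finite := by
  induction t using RTree.ind with
  | h a ts IH =>
    apply Set.Finite.subset
      (Set.Finite.insert []
        (Set.Finite.biUnion (List.finite_toSet ts) fun c hc =>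
          Set.Finite.biUnion (Set.finite_Iio ts.length) fun i _ =>
            Set.Finite.image (i :: ·) (IH c hc)))
    intro w hw
    match w with
    | [] => exact Set.mem_insert _ _
    | i :: w =>
      rw [Set.mem_setOf_eq, RTree.subtreeAt] at hw
      rcases h : ts[i]? with _ | c
      · rw [h] at hw; simp at hw
      · rw [h] at hw
        simp only [Option.bind_some] at hw
        have hmem : c ∈ ts := List.mem_of_getElem? h
        have hlt : i < ts.length := by
          by_contra hc
          rw [List.getElem?_eq_none (by omega)] at h
          cases h
        exact Set.mem_insert_iff.2 (Or.inr (Set.mem_biUnion hmem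
          (Set.mem_biUnion hlt ⟨w, hw, rfl⟩)))
theorem finite_lists {β : Type} {F : Set β} (hF : F.Finite) :
    ∀ n : ℕ, {l : List β | l.length ≤ n ∧ ∀ x ∈ l, x ∈ F}.Finite := by
  intro n
  induction n with
  | zero =>
    apply Set.Finite.subset (Set.finite_singleton [])
    rintro (_ | ⟨x, l⟩) ⟨h1, _⟩
    · exact rfl
    · simp at h1
  | succ n ih =>
    apply Set.Finite.subset
      (Set.Finite.insert [] (Set.Finite.biUnion hF fun x _ => Set.Finite.image (x :: ·) ih))
    rintro (_ | ⟨x, l⟩) ⟨h1, h2⟩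
    · exact Set.mem_insert _ _
    · refine Set.mem_insert_iff.2 (Or.inr (Set.mem_biUnion (h2 x (by simp))
        ⟨l, ⟨by simpa using h1, fun y hy => h2 y (by simp [hy])⟩, rfl⟩))

end Stmt6
namespace Stmt6

variable {S : Type} [CommSemiring S] {Γ : Type} {ar : Γ → ℕ}

theorem deriv_pos {H : WTGc S Γ ar} {t : RTree Γ} {ξ η : RTree (Γ ⊕ H.Q)}
    {d : List (H.P × List ℕ)} (h : H.Derives t ξ d η) :
    ∀ x ∈ d, (t.subtreeAt x.2).isSome := by
  induction h with
  | refl => simp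
  | @step ξ ζ η p w d hs _ ih =>
    intro x hx
    rcases List.mem_cons.1 hx with rfl | hx
    · obtain ⟨-, -, s, hsub, -⟩ := hs
      simp [hsub]
    · exact ih x hx

theorem deriv_funct {H : WTGc S Γ ar} {t : RTree Γ} {ξ η1 η2 : RTree (Γ ⊕ H.Q)}
    {d : List (H.P × List ℕ)} (h1 : H.Derives t ξ d η1) (h2 : H.Derives t ξ d η2) :
    η1 = η2 := by
  induction h1 generalizing η2 with
  | refl => cases h2; rfl
  | @step ξ ζ η p w d hs _ ih =>
    cases h2 with
    | step hs' hd' =>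
      obtain ⟨-, rfl, -⟩ := hs
      obtain ⟨-, rfl, -⟩ := hs'
      exact ih hd'

theorem D_finite (H : WTGc S Γ ar) (q : H.Q) (t : RTree Γ) : (H.D q t).Finite := by
  have hP : (Set.univ : Set H.P).Finite := @Set.finite_univ _ H.finP
  have hPos := pos_finite t
  have hF : {x : H.P × List ℕ | (t.subtreeAt x.2).isSome}.Finite := by
    apply Set.Finite.subset (Set.Finite.prod hP hPos)
    exact fun x hx => ⟨Set.mem_univ _, hx⟩
  apply Set.Finite.subset (finite_lists hF hPos.toFinset.card)
  rintro d ⟨hder, hlm⟩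
  have hpos : ∀ x ∈ d, (t.subtreeAt x.2).isSome := deriv_pos hder
  refine ⟨?_, hpos⟩
  -- positions are nodup and lie in the finite set of positions of t
  have hchain : List.Chain' PosLt (d.map Prod.snd) := hlm
  have hnodup : (d.map Prod.snd).Nodup := by
    have : IsTrans (List ℕ) PosLt := ⟨fun _ _ _ => posLt_trans⟩
    have hpw := List.isChain_iff_pairwise.1 hchain
    exact hpw.imp (fun h => by rintro rfl; exact posLt_irrefl _ h)
  have hsub : (d.map Prod.snd).toFinset ⊆ hPos.toFinset := by
    intro w hw
    rw [List.mem_toFinset] at hw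
    obtain ⟨x, hx, rfl⟩ := List.mem_map.1 hw
    exact (Set.Finite.mem_toFinset _).2 (hpos x hx)
  calc d.length = (d.map Prod.snd).length := by simp
    _ = (d.map Prod.snd).toFinset.card := (List.toFinset_card_of_nodup hnodup).symm
    _ ≤ hPos.toFinset.card := Finset.card_le_card hsub

end Stmt6
namespace Stmt6

open RTree

variable {S : Type} [CommSemiring S] {Γ : Type} {ar : Γ → ℕ}

section Construction

variable (G : WTGc S Γ ar) (hG : G.IsWTAc)

/-- The symbol of the (normalized) left-hand side of `p`. -/
noncomputable def sig (p : G.P) : Γ := (hG p).choose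

/-- The nonterminal list of the left-hand side of `p`. -/
noncomputable def qs (p : G.P) : List G.Q := (hG p).choose_spec.choose

theorem lhs_eq (p : G.P) :
    G.lhs p = .node (Sum.inl (sig G hG p))
      ((qs G hG p).map fun q => RTree.node (Sum.inr q) []) :=
  (hG p).choose_spec.choose_spec

theorem qs_len (p : G.P) : (qs G hG p).length = ar (sig G hG p) := by
  have h := G.lhs_wf p
  rw [lhs_eq G hG] at h
  cases h with
  | node h1 _ => simpa using h1

/-- New production type: a production together with an annotation of its
nonterminal positions by productions. -/
def PD : Type := (p : G.P) × (Fin (qs G hG p).length → G.P)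

instance : Finite (PD G hG) := by
  haveI := G.finP
  unfold PD
  infer_instance

instance : Finite (G.Q × G.P) := by
  haveI := G.finP; haveI := G.finQ
  exact inferInstance

/-- The annotated left-hand side. -/
noncomputable def lhsD (x : PD G hG) : RTree (Γ ⊕ (G.Q × G.P)) :=
  .node (Sum.inl (sig G hG x.1))
    (List.ofFn fun i => RTree.node (Sum.inr ((qs G hG x.1).get i, x.2 i)) [])

/-- The constraint-determined WTAc. -/
noncomputable def GD : WTGc S Γ ar where
  Q := G.Q × G.P
  P := PD G hG
  finQ := inferInstance
  finP := inferInstance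
  final := fun q => G.final q.1
  lhs := lhsD G hG
  tgt := fun x => (G.tgt x.1, x.1)
  eqc := fun x => G.eqc x.1
  nec := fun x => G.nec x.1
  wt := fun x => G.wt x.1
  lhs_wf := by
    intro x
    refine RTree.WF.node ?_ ?_
    · simpa using qs_len G hG x.1
    · intro c hc
      obtain ⟨i, rfl⟩ := Set.mem_range.1 ((List.mem_ofFn' _ _).1 hc)
      exact RTree.WF.node rfl (by simp)
  lhs_ne := by
    intro x q h
    exact Sum.inl_ne_inr (by injection h : Sum.inl (sig G hG x.1) = Sum.inr q)

attribute [reducible] GD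

/-- The projection on trees. -/
noncomputable def pt (t : RTree (Γ ⊕ (G.Q × G.P))) : RTree (Γ ⊕ G.Q) :=
  RTree.map (Sum.map id Prod.fst) t

/-- The projection on derivations. -/
def pd (d : List (PD G hG × List ℕ)) : List (G.P × List ℕ) :=
  d.map fun x => (x.1.1, x.2)

theorem lhsD_proj (x : PD G hG) : pt G (lhsD G hG x) = G.lhs x.1 := by
  rw [pt, lhsD, map_node, lhs_eq G hG]
  congr 1
  apply List.ext_getElem
  · simp
  intro j h1 h2
  simp only [List.getElem_map, List.getElem_ofFn, map_node, List.map_nil]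
  rfl

theorem pt_nt (q : G.Q) (p : G.P) :
    pt G (.node (Sum.inr (q, p)) []) = .node (Sum.inr q) [] := by
  rw [pt, map_node]; rfl

theorem pt_init (t : RTree Γ) : pt G (t.map Sum.inl) = t.map Sum.inl := by
  rw [pt, map_map]
  show RTree.map (fun a => Sum.inl a) t = _
  rfl

end Construction

end Stmt6
namespace Stmt6

open RTree

variable {S : Type} [CommSemiring S] {Γ : Type} {ar : Γ → ℕ}
variable {G : WTGc S Γ ar} {hG : G.IsWTAc}

theorem lhsD_inj {p : G.P} {f1 f2 : Fin (qs G hG p).length → G.P}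
    (h : lhsD G hG ⟨p, f1⟩ = lhsD G hG ⟨p, f2⟩) : f1 = f2 := by
  delta lhsD at h
  injection h with _ h
  rw [List.ofFn_inj] at h
  funext i
  have := congrFun h i
  injection this with h2 _
  injection h2 with h3
  exact (Prod.mk.injEq _ _ _ _ ▸ h3).2

theorem step_proj {t : RTree Γ} {ξ ζ : RTree (Γ ⊕ (GD G hG).Q)} {x : (GD G hG).P}
    {w : List ℕ} (h : (GD G hG).Step t ξ x w ζ) :
    G.Step t (pt G ξ) x.1 w (pt G ζ) := by
  obtain ⟨h1, h2, h3⟩ := h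
  refine ⟨?_, ?_, h3⟩
  · rw [pt, map_subtreeAt, h1, Option.map_some]
    exact congrArg some (lhsD_proj G hG x)
  · rw [h2, pt, pt, map_replaceAt]
    congr 1
    rw [map_node]
    rfl

theorem derives_proj {t : RTree Γ} {ξ η : RTree (Γ ⊕ (GD G hG).Q)}
    {d : List ((GD G hG).P × List ℕ)} (h : (GD G hG).Derives t ξ d η) :
    G.Derives t (pt G ξ) (pd G hG d) (pt G η) := by
  induction h with
  | refl => exact .refl _
  | step hs _ ih => exact .step (step_proj hs) ih

theorem step_lift {t : RTree Γ} {ξ ζ : RTree (Γ ⊕ G.Q)} {p : G.P} {w : List ℕ}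
    (h : G.Step t ξ p w ζ) (ξ' : RTree (Γ ⊕ (GD G hG).Q)) (hξ : pt G ξ' = ξ) :
    ∃ (f : Fin (qs G hG p).length → G.P) (ζ' : RTree (Γ ⊕ (GD G hG).Q)),
      (GD G hG).Step t ξ' ⟨p, f⟩ w ζ' ∧ pt G ζ' = ζ := by
  obtain ⟨h1, h2, h3⟩ := h
  -- find the subtree of ξ' at w
  have hsub : (ξ'.subtreeAt w).map (RTree.map (Sum.map id Prod.fst)) = some (G.lhs p) := by
    rw [← map_subtreeAt, ← pt, hξ, h1]
  rcases hu : ξ'.subtreeAt w with _ | u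
  · rw [hu] at hsub; exact absurd hsub (by simp)
  rw [hu, Option.map_some, Option.some_inj] at hsub
  -- analyze the shape of u
  rw [lhs_eq G hG] at hsub
  obtain ⟨a, ts, rfl, ha, hts⟩ := map_eq_node hsub
  obtain a | a := a
  · -- a is a terminal symbol
    have ha' : a = sig G hG p := by simpa [Sum.map] using ha
    subst ha'
    have hlen : ts.length = (qs G hG p).length := by
      have := congrArg List.length hts
      simpa using this
    have hchild : ∀ i : Fin (qs G hG p).length, ∃ r : G.P,
        ts[(i : ℕ)]'(by omega) = RTree.node (Sum.inr ((qs G hG p).get i, r)) [] := by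
      intro i
      have hi : RTree.map (Sum.map id Prod.fst) (ts[(i : ℕ)]'(by omega))
          = RTree.node (Sum.inr ((qs G hG p).get i)) [] := by
        have h' := congrArg (fun l => l[(i : ℕ)]?) hts
        simp only [List.getElem?_map] at h'
        rw [List.getElem?_eq_getElem (by omega : (i : ℕ) < ts.length),
          List.getElem?_eq_getElem i.2] at h'
        simpa using h'
      obtain ⟨b, cs, hc, hb, hcs⟩ := map_eq_node hi
      obtain b | b := b
      · exact absurd hb (by simp [Sum.map])
      · obtain ⟨q, r⟩ := b
        have hq : q = (qs G hG p).get i := by simpa [Sum.map] using hb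
        have hcs' : cs = [] := by simpa using congrArg List.length hcs
        exact ⟨r, by rw [hc, hq, hcs']⟩
    choose f hf using hchild
    have hu' : RTree.node (Sum.inl (sig G hG p)) ts = lhsD G hG ⟨p, f⟩ := by
      delta lhsD
      congr 1
      apply List.ext_getElem
      · simpa using hlen
      intro j hj1 hj2
      have := hf ⟨j, by omega⟩
      simpa using this
    refine ⟨f, ξ'.replaceAt w (RTree.node (Sum.inr ((GD G hG).tgt ⟨p, f⟩)) []), ⟨?_, rfl, h3⟩, ?_⟩
    · rw [hu, hu']
    · rw [h2, pt, map_replaceAt, ← pt, hξ]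
      congr 1
      rw [map_node]
      rfl
  · -- a cannot be a nonterminal
    exact absurd ha (by simp [Sum.map])

theorem derives_lift {t : RTree Γ} {ξ η : RTree (Γ ⊕ G.Q)} {d : List (G.P × List ℕ)}
    (h : G.Derives t ξ d η) :
    ∀ ξ' : RTree (Γ ⊕ (GD G hG).Q), pt G ξ' = ξ →
    ∃ (d' : List ((GD G hG).P × List ℕ)) (η' : RTree (Γ ⊕ (GD G hG).Q)),
      (GD G hG).Derives t ξ' d' η' ∧ pt G η' = η ∧ pd G hG d' = d := by
  induction h with
  | refl ξ => exact fun ξ' hξ => ⟨[], ξ', .refl _, hξ, rfl⟩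
  | @step ξ ζ η p w d hs _ ih =>
    intro ξ' hξ
    obtain ⟨f, ζ', hs', hζ⟩ := step_lift (hG := hG) hs ξ' hξ
    obtain ⟨d', η', hd', hη, hpd⟩ := ih ζ' hζ
    exact ⟨(⟨p, f⟩, w) :: d', η', .step hs' hd', hη, by rw [pd] at hpd ⊢; simp [hpd]⟩

theorem lift_unique {t : RTree Γ} {ξ η1 η2 : RTree (Γ ⊕ (GD G hG).Q)}
    {d1 d2 : List ((GD G hG).P × List ℕ)}
    (h1 : (GD G hG).Derives t ξ d1 η1) (h2 : (GD G hG).Derives t ξ d2 η2)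
    (hpd : pd G hG d1 = pd G hG d2) : d1 = d2 := by
  induction h1 generalizing d2 η2 with
  | refl =>
    cases d2 with
    | nil => rfl
    | cons x d2 => exact absurd hpd (by simp [pd])
  | @step ξ ζ η x w d hs hd ih =>
    cases h2 with
    | refl => exact absurd hpd (by simp [pd])
    | @step _ ζ2 _ x2 w2 d2 hs2 hd2 =>
      rw [pd, pd, List.map_cons, List.map_cons] at hpd
      obtain ⟨hx, hd'⟩ := List.cons.injEq _ _ _ _ ▸ hpd
      obtain ⟨hx1, rfl⟩ := Prod.mk.injEq _ _ _ _ ▸ hx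
      obtain ⟨p, f⟩ := x
      obtain ⟨p2, f2⟩ := x2
      have hp : p = p2 := hx1
      subst hp
      have hf : f = f2 := by
        have e3 : (GD G hG).lhs ⟨p, f⟩ = (GD G hG).lhs ⟨p, f2⟩ :=
          Option.some_inj.1 ((hs.1).symm.trans hs2.1)
        exact lhsD_inj (hG := hG) e3
      subst hf
      have hζ : ζ = ζ2 := by rw [hs.2.1, hs2.2.1]
      subst hζ
      rw [ih hd2 hd']

end Stmt6
namespace Stmt6

open RTree

variable {S : Type} [CommSemiring S] {Γ : Type} {ar : Γ → ℕ}
variable {G : WTGc S Γ ar} {hG : G.IsWTAc}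

theorem pd_snd (d : List ((GD G hG).P × List ℕ)) :
    (pd G hG d).map Prod.snd = d.map Prod.snd := by
  rw [pd, List.map_map]
  rfl

theorem D_proj {t : RTree Γ} {q : G.Q} {p : G.P} {d' : List ((GD G hG).P × List ℕ)}
    (h : d' ∈ (GD G hG).D (q, p) t) : pd G hG d' ∈ G.D q t := by
  obtain ⟨hder, hlm⟩ := h
  refine ⟨?_, ?_⟩
  · have := derives_proj (hG := hG) hder
    rwa [pt_init, pt_nt] at this
  · rw [Leftmost, pd_snd]
    exact hlm

theorem D_lift {t : RTree Γ} {q : G.Q} {d : List (G.P × List ℕ)}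
    (h : d ∈ G.D q t) :
    ∃ (p : G.P) (d' : List ((GD G hG).P × List ℕ)),
      d' ∈ (GD G hG).D (q, p) t ∧ pd G hG d' = d := by
  obtain ⟨hder, hlm⟩ := h
  obtain ⟨d', η', hd', hη, hpd⟩ :=
    derives_lift (hG := hG) hder (t.map Sum.inl) (pt_init G t)
  obtain ⟨b, cs, rfl, hb, hcs⟩ := map_eq_node hη
  have hcs' : cs = [] := by simpa using congrArg List.length hcs
  subst hcs'
  obtain b | b := b
  · exact absurd hb (by simp [Sum.map])
  · obtain ⟨q', p⟩ := b
    have hq : q' = q := by simpa [Sum.map] using hb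
    subst hq
    refine ⟨p, d', ⟨hd', ?_⟩, hpd⟩
    rw [Leftmost, ← pd_snd (hG := hG), hpd]
    exact hlm

theorem wtD_proj (d' : List ((GD G hG).P × List ℕ)) :
    (GD G hG).wtD d' = G.wtD (pd G hG d') := by
  rw [WTGc.wtD, WTGc.wtD, pd, List.map_map]
  rfl

theorem key_sum [instP : Fintype G.P] (q : G.Q) (t : RTree Γ) :
    ∑ p : G.P, (GD G hG).qWeight (q, p) t = G.qWeight q t := by
  have hfin : (G.D q t).Finite := D_finite G q t
  have hfin' : ∀ p : G.P, ((GD G hG).D (q, p) t).Finite := fun p => D_finite (GD G hG) (q, p) t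
  have hq' : ∀ p : G.P, (GD G hG).qWeight (q, p) t
      = ∑ d' ∈ (hfin' p).toFinset, (GD G hG).wtD d' := by
    intro p
    rw [WTGc.qWeight, finsum_mem_eq_finite_toFinset_sum _ (hfin' p)]
  have hqG : G.qWeight q t = ∑ d ∈ hfin.toFinset, G.wtD d := by
    rw [WTGc.qWeight, finsum_mem_eq_finite_toFinset_sum _ hfin]
  rw [hqG]
  simp only [hq']
  refine ((Finset.sum_sigma Finset.univ (fun p => (hfin' p).toFinset)
    (fun x => (GD G hG).wtD x.2)).symm).trans ?_
  refine Finset.sum_bij (fun x _ => pd G hG x.2) ?_ ?_ ?_ ?_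
  · rintro ⟨p, d'⟩ hx
    rw [Finset.mem_sigma] at hx
    rw [Set.Finite.mem_toFinset]
    exact D_proj ((Set.Finite.mem_toFinset _).1 hx.2)
  · rintro ⟨p1, d1⟩ h1 ⟨p2, d2⟩ h2 heq
    rw [Finset.mem_sigma] at h1 h2
    have hm1 := (Set.Finite.mem_toFinset _).1 h1.2
    have hm2 := (Set.Finite.mem_toFinset _).1 h2.2
    have hd : d1 = d2 := lift_unique hm1.1 hm2.1 heq
    subst hd
    have hη := deriv_funct hm1.1 hm2.1
    have hp : p1 = p2 := by
      injection hη with h1' _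
      injection h1' with h2'
      exact (Prod.mk.injEq _ _ _ _ ▸ h2').2
    subst hp
    rfl
  · intro d hd
    obtain ⟨p, d', hm, hpd⟩ := D_lift (hG := hG) ((Set.Finite.mem_toFinset _).1 hd)
    exact ⟨⟨p, d'⟩, Finset.mem_sigma.2 ⟨Finset.mem_univ _, (Set.Finite.mem_toFinset _).2 hm⟩, hpd⟩
  · rintro ⟨p, d'⟩ _
    exact wtD_proj d'

theorem GD_equiv : G.Equivalent (GD G hG) := by
  intro t
  haveI := G.finP
  haveI := G.finQ
  haveI : Fintype G.P := Fintype.ofFinite G.P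
  haveI : Fintype G.Q := Fintype.ofFinite G.Q
  letI : Fintype (GD G hG).Q := show Fintype (G.Q × G.P) from inferInstance
  rw [WTGc.weight, WTGc.weight, finsum_eq_sum_of_fintype, finsum_eq_sum_of_fintype]
  show _ = ∑ x : G.Q × G.P, G.final x.1 * (GD G hG).qWeight x t
  rw [Fintype.sum_prod_type]
  refine Finset.sum_congr rfl fun q _ => ?_
  rw [← key_sum (G := G) (hG := hG) q t, Finset.mul_sum]

end Stmt6

/-- every WTAc can be transformed into an equivalent
constraint-determined WTAc, preserving positivity and unambiguity. -/
theorem stmt6 {S : Type} [CommSemiring S] {Γ : Type} [Finite Γ] {ar : Γ → ℕ}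
    (G : WTGc S Γ ar) (hG : G.IsWTAc) :
    ∃ G' : WTGc S Γ ar, G'.IsWTAc ∧ G'.ConstraintDetermined ∧ G.Equivalent G' ∧
      (G.Positive → G'.Positive) ∧ (G.Unambiguous → G'.Unambiguous) := by
  refine ⟨Stmt6.GD G hG, ?_, ?_, Stmt6.GD_equiv, ?_, ?_⟩
  · -- IsWTAc
    intro x
    refine ⟨Stmt6.sig G hG x.1,
      List.ofFn (fun i => ((Stmt6.qs G hG x.1).get i, x.2 i)), ?_⟩
    show Stmt6.lhsD G hG x = _
    rw [Stmt6.lhsD, List.map_ofFn]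
    rfl
  · -- ConstraintDetermined
    intro x x' _ ht
    have h1 : x.1 = x'.1 := by
      have := congrArg Prod.snd ht
      exact this
    exact ⟨congrArg G.eqc h1, congrArg G.nec h1⟩
  · -- Positive
    intro hpos x
    exact hpos x.1
  · -- Unambiguous
    intro hU t q1 q2 d1 d2 hf1 hf2 h1 h2
    obtain ⟨qa, pa⟩ := q1
    obtain ⟨qb, pb⟩ := q2
    have hm1 := Stmt6.D_proj (hG := hG) h1
    have hm2 := Stmt6.D_proj (hG := hG) h2
    obtain ⟨hq, hd⟩ := hU t qa qb _ _ hf1 hf2 hm1 hm2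
    subst hq
    have hd' : d1 = d2 := Stmt6.lift_unique h1.1 h2.1 hd
    subst hd'
    have hη := Stmt6.deriv_funct h1.1 h2.1
    have hp : pa = pb := by
      injection hη with ha _
      injection ha with hb
      exact (Prod.mk.injEq _ _ _ _ ▸ hb).2
    subst hp
    exact ⟨rfl, rfl⟩
end
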